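/- arXiv:1507.02384 — 10 statements merged into one kernel-verified Lean document; each statement's English description precedes it below -/
import Mathlib

section
/- Every finite simple bipartite graph G with bipartition (A,B) has a minimum vertex cover C such that every minimum vertex cover C' of G satisfies A ∩ C' ⊆ A ∩ C and B ∩ C ⊆ B ∩ C'. -/
open SimpleGraph

/-- A vertex cover of a graph: a set of vertices containing at least one endpoint
of every edge. -/
def IsVertexCover {V : Type} (G : SimpleGraph V) (C : Set V) : Prop :=
  ∀ ⦃u v : V⦄, G.Adj u v → u ∈ C ∨ v ∈ C

/-- A minimum vertex cover: a vertex cover of smallest cardinality. -/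
def IsMinVertexCover {V : Type} (G : SimpleGraph V) (C : Set V) : Prop :=
  _root_.IsVertexCover G C ∧ ∀ C' : Set V, _root_.IsVertexCover G C' → C.ncard ≤ C'.ncard

/-- `(A, B)` is a bipartition of `G`: `A` and `B` are disjoint, cover all vertices,
and every edge joins a vertex of `A` to a vertex of `B`. -/
def IsBipartition {V : Type} (G : SimpleGraph V) (A B : Set V) : Prop :=
  Disjoint A B ∧ A ∪ B = Set.univ ∧
    ∀ ⦃u v : V⦄, G.Adj u v → (u ∈ A ∧ v ∈ B) ∨ (u ∈ B ∧ v ∈ A)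

/-- A matching of `G`: a set of edges of `G` that are pairwise vertex-disjoint. -/
def IsMatching' {V : Type} (G : SimpleGraph V) (M : Set (Sym2 V)) : Prop :=
  M ⊆ G.edgeSet ∧ ∀ e ∈ M, ∀ f ∈ M, e ≠ f → ∀ v : V, ¬ (v ∈ e ∧ v ∈ f)

/-- A maximum matching: a matching of largest cardinality. -/
def IsMaxMatching {V : Type} (G : SimpleGraph V) (M : Set (Sym2 V)) : Prop :=
  IsMatching' G M ∧ ∀ M' : Set (Sym2 V), IsMatching' G M' → M'.ncard ≤ M.ncard

/-- A vertex is `M`-saturated if it is an endpoint of some edge of `M`. -/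
def MSaturated {V : Type} (M : Set (Sym2 V)) (v : V) : Prop :=
  ∃ e ∈ M, v ∈ e

/-- A list of edges is `M`-alternating if consecutive edges alternate between
membership and non-membership in `M`. -/
def AlternatingEdges {V : Type} (M : Set (Sym2 V)) (l : List (Sym2 V)) : Prop :=
  List.Chain' (fun e f => (e ∈ M ↔ f ∉ M)) l

/-- The edge `e` lies on an `M`-alternating path starting at an `M`-unsaturated
vertex of `A`. -/
def OnAltPath {V : Type} (G : SimpleGraph V) (M : Set (Sym2 V)) (A : Set V)
    (e : Sym2 V) : Prop :=
  ∃ (a z : V) (p : G.Walk a z), a ∈ A ∧ ¬ MSaturated M a ∧ p.IsPath ∧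
    AlternatingEdges M p.edges ∧ e ∈ p.edges

/-- The `A`-König cover of `G` constructed from a maximum matching `M`: for each
edge `ab ∈ M` with `a ∈ A` and `b ∈ B`, put `b` into the cover if `ab` lies on an
`M`-alternating path starting at an `M`-unsaturated vertex of `A`, and otherwise
put `a` into the cover. -/
def koenigCoverFrom {V : Type} (G : SimpleGraph V) (M : Set (Sym2 V))
    (A B : Set V) : Set V :=
  {b | b ∈ B ∧ ∃ e ∈ M, b ∈ e ∧ OnAltPath G M A e} ∪
    {a | a ∈ A ∧ ∃ e ∈ M, a ∈ e ∧ ¬ OnAltPath G M A e}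

/-- `C` is the `A`-König cover of the bipartite graph `G` with bipartition `(A,B)`:
the unique minimum vertex cover such that every minimum vertex cover `C'`
satisfies `A ∩ C' ⊆ A ∩ C` and `B ∩ C ⊆ B ∩ C'`. -/
def IsKoenigCover {V : Type} (G : SimpleGraph V) (A B : Set V) (C : Set V) : Prop :=
  IsMinVertexCover G C ∧
    ∀ C' : Set V, IsMinVertexCover G C' → A ∩ C' ⊆ A ∩ C ∧ B ∩ C ⊆ B ∩ C'

/-- `G[S,T]`: the bipartite graph on the vertices of `G` whose edges are exactly
the edges of `G` with one endpoint in `S` and the other in `T`. -/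
def crossingGraph {V : Type} (G : SimpleGraph V) (S T : Set V) : SimpleGraph V where
  Adj u v := G.Adj u v ∧ ((u ∈ S ∧ v ∈ T) ∨ (u ∈ T ∧ v ∈ S))
  symm := ⟨fun u v h =>
    ⟨h.1.symm, h.2.elim (fun h' => Or.inr ⟨h'.2, h'.1⟩) (fun h' => Or.inl ⟨h'.2, h'.1⟩)⟩⟩
  loopless := ⟨fun u h => G.loopless.irrefl u h.1⟩

/-- Every finite bipartite graph `G` with bipartition `(A,B)` has
a minimum vertex cover `C` such that every minimum vertex cover `C'` satisfies
`A ∩ C' ⊆ A ∩ C` and `B ∩ C ⊆ B ∩ C'`. -/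
theorem exists_koenigCover {V : Type} [Fintype V] (G : SimpleGraph V)
    (A B : Set V) (hbip : IsBipartition G A B) :
    ∃ C : Set V, IsMinVertexCover G C ∧
      ∀ C' : Set V, IsMinVertexCover G C' →
        A ∩ C' ⊆ A ∩ C ∧ B ∩ C ⊆ B ∩ C' := by
  obtain ⟨hdisj, hcov, hadj⟩ := hbip
  -- every set splits as A-part plus B-part
  have hsplit : ∀ S : Set V, S.ncard = (A ∩ S).ncard + (B ∩ S).ncard := by
    intro S
    have h : (A ∩ S) ∪ (B ∩ S) = S := by
      rw [← Set.union_inter_distrib_right, hcov, Set.univ_inter]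
    conv_lhs => rw [← h]
    rw [Set.ncard_union_eq
      (hdisj.mono Set.inter_subset_left Set.inter_subset_left)
      (Set.toFinite _) (Set.toFinite _)]
  -- existence of a minimum vertex cover
  obtain ⟨C0, hC0, hC0m⟩ := Set.Finite.exists_minimalFor Set.ncard
    {C : Set V | _root_.IsVertexCover G C} (Set.toFinite _)
    ⟨Set.univ, fun u v _ => Or.inl trivial⟩
  have hC0min : IsMinVertexCover G C0 := by
    refine ⟨hC0, fun C' h => ?_⟩
    by_contra hlt
    push_neg at hlt
    exact absurd (hC0m h hlt.le) (not_le.mpr hlt)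
  -- pick a minimum cover maximizing the A-part
  obtain ⟨C, hC, hCm⟩ := Set.Finite.exists_maximalFor (fun C => (A ∩ C).ncard)
    {C : Set V | IsMinVertexCover G C} (Set.toFinite _) ⟨C0, hC0min⟩
  have hmax : ∀ C'' : Set V, IsMinVertexCover G C'' →
      (A ∩ C'').ncard ≤ (A ∩ C).ncard := by
    intro C'' h
    by_contra hlt
    push_neg at hlt
    exact absurd (hCm h hlt.le) (not_le.mpr hlt)
  refine ⟨C, hC, fun C' hC' => ?_⟩
  set D := (A ∩ (C ∪ C')) ∪ (B ∩ (C ∩ C')) with hD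
  set E := (A ∩ (C ∩ C')) ∪ (B ∩ (C ∪ C')) with hE
  -- D is a vertex cover
  have hDc : _root_.IsVertexCover G D := by
    intro u v huv
    rcases hadj huv with ⟨huA, hvB⟩ | ⟨huB, hvA⟩
    · by_cases hvC : v ∈ C
      · by_cases hvC' : v ∈ C'
        · exact Or.inr (Set.mem_union_right _ ⟨hvB, hvC, hvC'⟩)
        · have huC' : u ∈ C' := (hC'.1 huv).resolve_right hvC'
          exact Or.inl (Set.mem_union_left _ ⟨huA, Or.inr huC'⟩)
      · have huC : u ∈ C := (hC.1 huv).resolve_right hvC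
        exact Or.inl (Set.mem_union_left _ ⟨huA, Or.inl huC⟩)
    · by_cases huC : u ∈ C
      · by_cases huC' : u ∈ C'
        · exact Or.inl (Set.mem_union_right _ ⟨huB, huC, huC'⟩)
        · have hvC' : v ∈ C' := (hC'.1 huv).resolve_left huC'
          exact Or.inr (Set.mem_union_left _ ⟨hvA, Or.inr hvC'⟩)
      · have hvC : v ∈ C := (hC.1 huv).resolve_left huC
        exact Or.inr (Set.mem_union_left _ ⟨hvA, Or.inl hvC⟩)
  -- E is a vertex cover
  have hEc : _root_.IsVertexCover G E := by
    intro u v huv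
    rcases hadj huv with ⟨huA, hvB⟩ | ⟨huB, hvA⟩
    · by_cases huC : u ∈ C
      · by_cases huC' : u ∈ C'
        · exact Or.inl (Set.mem_union_left _ ⟨huA, huC, huC'⟩)
        · have hvC' : v ∈ C' := (hC'.1 huv).resolve_left huC'
          exact Or.inr (Set.mem_union_right _ ⟨hvB, Or.inr hvC'⟩)
      · have hvC : v ∈ C := (hC.1 huv).resolve_left huC
        exact Or.inr (Set.mem_union_right _ ⟨hvB, Or.inl hvC⟩)
    · by_cases hvC : v ∈ C
      · by_cases hvC' : v ∈ C'
        · exact Or.inr (Set.mem_union_left _ ⟨hvA, hvC, hvC'⟩)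
        · have huC' : u ∈ C' := (hC'.1 huv).resolve_right hvC'
          exact Or.inl (Set.mem_union_right _ ⟨huB, Or.inr huC'⟩)
      · have huC : u ∈ C := (hC.1 huv).resolve_right hvC
        exact Or.inl (Set.mem_union_right _ ⟨huB, Or.inl huC⟩)
  -- cardinalities
  have hDcard : D.ncard = (A ∩ (C ∪ C')).ncard + (B ∩ (C ∩ C')).ncard :=
    Set.ncard_union_eq (hdisj.mono Set.inter_subset_left Set.inter_subset_left)
      (Set.toFinite _) (Set.toFinite _)
  have hEcard : E.ncard = (A ∩ (C ∩ C')).ncard + (B ∩ (C ∪ C')).ncard :=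
    Set.ncard_union_eq (hdisj.mono Set.inter_subset_left Set.inter_subset_left)
      (Set.toFinite _) (Set.toFinite _)
  have hsum : D.ncard + E.ncard = C.ncard + C'.ncard := by
    have h1 : A ∩ (C ∪ C') = (A ∩ C) ∪ (A ∩ C') := Set.inter_union_distrib_left ..
    have h2 : A ∩ (C ∩ C') = (A ∩ C) ∩ (A ∩ C') := by
      rw [Set.inter_inter_distrib_left]
    have h3 : B ∩ (C ∪ C') = (B ∩ C) ∪ (B ∩ C') := Set.inter_union_distrib_left ..
    have h4 : B ∩ (C ∩ C') = (B ∩ C) ∩ (B ∩ C') := by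
      rw [Set.inter_inter_distrib_left]
    have u1 := Set.ncard_union_add_ncard_inter (A ∩ C) (A ∩ C')
      (Set.toFinite _) (Set.toFinite _)
    have u2 := Set.ncard_union_add_ncard_inter (B ∩ C) (B ∩ C')
      (Set.toFinite _) (Set.toFinite _)
    rw [hDcard, hEcard, h1, h2, h3, h4, hsplit C, hsplit C']
    omega
  have hCC' : C.ncard = C'.ncard := le_antisymm (hC.2 C' hC'.1) (hC'.2 C hC.1)
  have hDge : C.ncard ≤ D.ncard := hC.2 D hDc
  have hEge : C.ncard ≤ E.ncard := hC.2 E hEc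
  have hDeq : D.ncard = C.ncard := by omega
  have hEle : E.ncard ≤ C'.ncard := by omega
  -- D is a minimum vertex cover
  have hDmin : IsMinVertexCover G D := ⟨hDc, fun X hX => hDeq ▸ hC.2 X hX⟩
  have hAD : A ∩ D = A ∩ (C ∪ C') := by
    apply Set.Subset.antisymm
    · rintro x ⟨hxA, hx⟩
      rcases hx with hx | ⟨hxB, _⟩
      · exact hx
      · exact (Set.disjoint_left.mp hdisj hxA hxB).elim
    · intro x hx
      exact ⟨hx.1, Or.inl hx⟩
  have ha : (A ∩ (C ∪ C')).ncard ≤ (A ∩ C).ncard := hAD ▸ hmax D hDmin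
  have hACeq : A ∩ C = A ∩ (C ∪ C') :=
    Set.eq_of_subset_of_ncard_le (fun x hx => ⟨hx.1, Or.inl hx.2⟩) ha
      (Set.toFinite _)
  have part1 : A ∩ C' ⊆ A ∩ C := by
    intro x hx
    rw [hACeq]
    exact ⟨hx.1, Or.inr hx.2⟩
  have hACC' : A ∩ (C ∩ C') = A ∩ C' := by
    apply Set.Subset.antisymm
    · rintro x ⟨hxA, _, hx⟩
      exact ⟨hxA, hx⟩
    · intro x hx
      exact ⟨hx.1, (part1 hx).2, hx.2⟩
  have hb : (B ∩ (C ∪ C')).ncard ≤ (B ∩ C').ncard := by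
    have := hsplit C'
    rw [hEcard, hACC'] at hEle
    omega
  have hBeq : B ∩ C' = B ∩ (C ∪ C') :=
    Set.eq_of_subset_of_ncard_le (fun x hx => ⟨hx.1, Or.inr hx.2⟩) hb
      (Set.toFinite _)
  have part2 : B ∩ C ⊆ B ∩ C' := by
    intro x hx
    rw [hBeq]
    exact ⟨hx.1, Or.inl hx.2⟩
  exact ⟨part1, part2⟩
end

section
/- Let G be a finite simple bipartite graph with bipartition (A,B), let M be a maximum matching of G, let C* be the A-König cover of G constructed from M, and let C' be any minimum vertex cover of G. Then A ∩ C' ⊆ A ∩ C*. -/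
open SimpleGraph

open scoped Classical

namespace KoenigAux

variable {V : Type} {G : SimpleGraph V} {A B : Set V} {M : Set (Sym2 V)} {C' : Set V}




lemma sym2_rep (he : e ∈ G.edgeSet) {v : V} (hv : v ∈ e) :
    ∃ w, e = s(v, w) ∧ G.Adj v w := by
  obtain ⟨w, rfl⟩ := Sym2.mem_iff_exists.1 hv
  exact ⟨w, rfl, he⟩

lemma adjAB (hbip : IsBipartition G A B) {u v : V} (h : G.Adj u v) (hu : u ∈ A) : v ∈ B := by
  rcases hbip.2.2 h with ⟨_, hv⟩ | ⟨hu', _⟩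
  · exact hv
  · exact (Set.disjoint_left.mp hbip.1 hu hu').elim

lemma adjBA (hbip : IsBipartition G A B) {u v : V} (h : G.Adj u v) (hu : u ∈ B) : v ∈ A := by
  rcases hbip.2.2 h with ⟨hu', _⟩ | ⟨_, hv⟩
  · exact (Set.disjoint_left.mp hbip.1 hu' hu).elim
  · exact hv

lemma notAB (hbip : IsBipartition G A B) {v : V} (h1 : v ∈ A) (h2 : v ∈ B) : False :=
  Set.disjoint_left.mp hbip.1 h1 h2

lemma mem_A_or_B (hbip : IsBipartition G A B) (v : V) : v ∈ A ∨ v ∈ B := by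
  have : v ∈ A ∪ B := hbip.2.1 ▸ Set.mem_univ v
  exact this

lemma head_mem_start : ∀ {u z : V} (q : G.Walk u z), ∀ f ∈ q.edges.head?, u ∈ f := by
  intro u z q
  cases q with
  | nil => simp
  | cons h r =>
    intro f hf
    simp only [Walk.edges_cons, List.head?_cons, Option.mem_def, Option.some.injEq] at hf
    subst hf; simp

lemma last_mem_end : ∀ {u z : V} (q : G.Walk u z), ∀ f ∈ q.edges.getLast?, z ∈ f := by
  intro u z q f hf
  have := head_mem_start q.reverse f ?_
  · exact this
  · rw [Walk.edges_reverse, List.head?_reverse]; exact hf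

lemma mem_support_of_edge {u z v : V} {q : G.Walk u z} {e : Sym2 V}
    (he : e ∈ q.edges) (hv : v ∈ e) : v ∈ q.support := by
  obtain ⟨w, rfl⟩ := Sym2.mem_iff_exists.1 hv
  exact q.fst_mem_support_of_mem_edges he

lemma isPath_concat {u v w : V} {p : G.Walk u v} (hp : p.IsPath) (h : G.Adj v w)
    (hw : w ∉ p.support) : (p.concat h).IsPath := by
  rw [Walk.isPath_def, Walk.support_concat]
  rw [← List.concat_eq_append]
  exact List.Nodup.concat hw hp.support_nodup

lemma unique_edge (hm : IsMatching' G M) {e f : Sym2 V} {v : V} (he : e ∈ M) (hf : f ∈ M)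
    (hve : v ∈ e) (hvf : v ∈ f) : e = f := by
  by_contra hne
  exact hm.2 e he f hf hne v ⟨hve, hvf⟩

lemma head_notM {u z : V} (q : G.Walk u z) (hu : ¬ MSaturated M u) :
    ∀ f ∈ q.edges.head?, f ∉ M :=
  fun f hf hfM => hu ⟨f, hfM, head_mem_start q f hf⟩

lemma phase_next (hbip : IsBipartition G A B) {u v₁ z : V} (h : G.Adj u v₁) (r : G.Walk v₁ z)
    (hc : AlternatingEdges M (Walk.cons h r).edges)
    (hp : (u ∈ A ∧ s(u,v₁) ∉ M) ∨ (u ∈ B ∧ s(u,v₁) ∈ M)) :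
    AlternatingEdges M r.edges ∧
    ((v₁ ∈ A ∧ ∀ f ∈ r.edges.head?, f ∉ M) ∨ (v₁ ∈ B ∧ ∀ f ∈ r.edges.head?, f ∈ M)) := by
  rw [AlternatingEdges, Walk.edges_cons] at hc
  replace hc := List.isChain_cons.1 hc
  obtain ⟨hrel, hc⟩ := hc
  refine ⟨hc, ?_⟩
  rcases hp with ⟨hu, hm⟩ | ⟨hu, hm⟩
  · exact Or.inr ⟨adjAB hbip h hu, fun f hf => by have := hrel f hf; tauto⟩
  · exact Or.inl ⟨adjBA hbip h hu, fun f hf => by have := hrel f hf; tauto⟩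

lemma phase_simp {u v₁ z : V} (h : G.Adj u v₁) (r : G.Walk v₁ z)
    (hp : (u ∈ A ∧ ∀ f ∈ (Walk.cons h r).edges.head?, f ∉ M) ∨
      (u ∈ B ∧ ∀ f ∈ (Walk.cons h r).edges.head?, f ∈ M)) :
    (u ∈ A ∧ s(u,v₁) ∉ M) ∨ (u ∈ B ∧ s(u,v₁) ∈ M) := by
  rcases hp with ⟨h1, h2⟩ | ⟨h1, h2⟩
  · exact Or.inl ⟨h1, h2 _ rfl⟩
  · exact Or.inr ⟨h1, h2 _ rfl⟩

lemma asat (hbip : IsBipartition G A B) :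
    ∀ {u z : V} (q : G.Walk u z), AlternatingEdges M q.edges →
    ((u ∈ A ∧ ∀ f ∈ q.edges.head?, f ∉ M) ∨ (u ∈ B ∧ ∀ f ∈ q.edges.head?, f ∈ M)) →
    ∀ v ∈ q.support, v ∈ A → v = u ∨ ∃ f ∈ q.edges, f ∈ M ∧ v ∈ f := by
  intro u z q
  induction q with
  | nil =>
    intro _ _ v hv _
    left
    simpa using hv
  | @cons u v₁ z h r ih =>
    intro hc hp v hv hvA
    have hp' := phase_simp h r hp
    obtain ⟨hc', hph⟩ := phase_next hbip h r hc hp'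
    rw [Walk.support_cons] at hv
    rcases List.mem_cons.1 hv with rfl | hv'
    · exact Or.inl rfl
    · rcases ih hc' hph v hv' hvA with rfl | ⟨f, hf, hfM, hvf⟩
      · rcases hp' with ⟨huA, _⟩ | ⟨_, hM⟩
        · exact (notAB hbip hvA (adjAB hbip h huA)).elim
        · exact Or.inr ⟨s(u,v), by simp, hM, by simp⟩
      · exact Or.inr ⟨f, by simp [hf], hfM, hvf⟩

lemma bsat (hbip : IsBipartition G A B) :
    ∀ {u z : V} (q : G.Walk u z), AlternatingEdges M q.edges →
    ((u ∈ A ∧ ∀ f ∈ q.edges.head?, f ∉ M) ∨ (u ∈ B ∧ ∀ f ∈ q.edges.head?, f ∈ M)) →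
    ∀ v ∈ q.support, v ∈ B → v = z ∨ ∃ f ∈ q.edges, f ∈ M ∧ v ∈ f := by
  intro u z q
  induction q with
  | nil =>
    intro _ _ v hv _
    left
    simpa using hv
  | @cons u v₁ z h r ih =>
    intro hc hp v hv hvB
    have hp' := phase_simp h r hp
    obtain ⟨hc', hph⟩ := phase_next hbip h r hc hp'
    rw [Walk.support_cons] at hv
    rcases List.mem_cons.1 hv with rfl | hv'
    · rcases hp' with ⟨hvA, _⟩ | ⟨_, hM⟩
      · exact (notAB hbip hvA hvB).elim
      · exact Or.inr ⟨s(v,v₁), by simp, hM, by simp⟩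
    · rcases ih hc' hph v hv' hvB with rfl | ⟨f, hf, hfM, hvf⟩
      · exact Or.inl rfl
      · exact Or.inr ⟨f, by simp [hf], hfM, hvf⟩

lemma lastA (hbip : IsBipartition G A B) :
    ∀ {u z : V} (q : G.Walk u z), AlternatingEdges M q.edges →
    ((u ∈ A ∧ ∀ f ∈ q.edges.head?, f ∉ M) ∨ (u ∈ B ∧ ∀ f ∈ q.edges.head?, f ∈ M)) →
    ∀ e, q.edges.getLast? = some e → (e ∈ M → z ∈ A) ∧ (e ∉ M → z ∈ B) := by
  intro u z q
  induction q with
  | nil => intro _ _ e he; simp at he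
  | @cons u v₁ z h r ih =>
    intro hc hp e he
    have hp' := phase_simp h r hp
    obtain ⟨hc', hph⟩ := phase_next hbip h r hc hp'
    cases r with
    | nil =>
      simp only [Walk.edges_cons, Walk.edges_nil, List.getLast?_singleton,
        Option.some.injEq] at he
      subst he
      rcases hp' with ⟨huA, hm⟩ | ⟨huB, hm⟩
      · exact ⟨fun hM => (hm hM).elim, fun _ => adjAB hbip h huA⟩
      · exact ⟨fun _ => adjBA hbip h huB, fun hn => (hn hm).elim⟩
    | cons h₂ r₂ =>
      have : (Walk.cons h (Walk.cons h₂ r₂)).edges.getLast? =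
          (Walk.cons h₂ r₂).edges.getLast? := by
        simp [List.getLast?_cons_cons]
      rw [this] at he
      exact ih hc' hph e he

lemma firstedge : ∀ {w z : V} (r : G.Walk w z), r.IsPath → ∀ {f : Sym2 V}, f ∈ r.edges →
    w ∈ f → r.edges.head? = some f := by
  intro w z r hr f hf hw
  cases r with
  | nil => simp at hf
  | cons h' r' =>
    rw [Walk.edges_cons] at hf ⊢
    rcases List.mem_cons.1 hf with rfl | hf'
    · rfl
    · exact absurd (mem_support_of_edge hf' hw) ((Walk.cons_isPath_iff h' r').1 hr).2

lemma shared : ∀ {u z : V} (q : G.Walk u z), q.IsPath → AlternatingEdges M q.edges →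
    ∀ e ∈ q.edges, ∀ f ∈ q.edges, e ≠ f → ∀ v, v ∈ e → v ∈ f → (e ∈ M ↔ f ∉ M) := by
  intro u z q
  induction q with
  | nil => intro _ _ e he; simp at he
  | @cons u v₁ z h r ih =>
    intro hq hc e he f hf hef v hve hvf
    obtain ⟨hrel, hc'⟩ := List.isChain_cons.1 hc
    have hpath' := ((Walk.cons_isPath_iff h r).1 hq).1
    have hu : u ∉ r.support := ((Walk.cons_isPath_iff h r).1 hq).2
    rw [Walk.edges_cons] at he hf
    rcases List.mem_cons.1 he with rfl | he' <;> rcases List.mem_cons.1 hf with rfl | hf'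
    · exact (hef rfl).elim
    · -- e = s(u,v₁), f ∈ r.edges
      rcases Sym2.mem_iff.1 hve with rfl | rfl
      · exact absurd (mem_support_of_edge hf' hvf) hu
      · have := firstedge r hpath' hf' hvf
        exact hrel f (show f ∈ r.edges.head? by rw [this]; rfl)
    · -- f = s(u,v₁), e ∈ r.edges
      rcases Sym2.mem_iff.1 hvf with rfl | rfl
      · exact absurd (mem_support_of_edge he' hve) hu
      · have := firstedge r hpath' he' hve
        have h2 := hrel e (show e ∈ r.edges.head? by rw [this]; rfl)
        tauto
    · exact ih hpath' hc' e he' f hf' hef v hve hvf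

lemma key (hbip : IsBipartition G A B) (hcov : ∀ ⦃x y : V⦄, G.Adj x y → x ∈ C' ∨ y ∈ C')
    (hone : ∀ e ∈ M, ∀ x ∈ e, ∀ y ∈ e, x ≠ y → x ∈ C' → y ∉ C') :
    ∀ {u z : V} (q : G.Walk u z), AlternatingEdges M q.edges →
    ((u ∈ A ∧ u ∉ C' ∧ ∀ f ∈ q.edges.head?, f ∉ M) ∨
      (u ∈ B ∧ u ∈ C' ∧ ∀ f ∈ q.edges.head?, f ∈ M)) →
    ∀ v ∈ q.support, v ∈ A → v ∉ C' := by
  intro u z q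
  induction q with
  | nil =>
    intro _ hp v hv hvA
    simp only [Walk.support_nil, List.mem_singleton] at hv
    subst hv
    rcases hp with ⟨_, h2, _⟩ | ⟨h1, _, _⟩
    · exact h2
    · exact (notAB hbip hvA h1).elim
  | @cons u v₁ z h r ih =>
    intro hc hp v hv hvA
    have hc' : List.Chain' (fun e f => (e ∈ M ↔ f ∉ M)) r.edges :=
      (List.isChain_cons.1 hc).2
    have hrel := (List.isChain_cons.1 hc).1
    rw [Walk.support_cons] at hv
    rcases hp with ⟨huA, huC, hm⟩ | ⟨huB, huC, hm⟩
    · have hsm : s(u,v₁) ∉ M := hm _ rfl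
      rcases List.mem_cons.1 hv with rfl | hv'
      · exact huC
      · have hv₁B : v₁ ∈ B := adjAB hbip h huA
        have hv₁C : v₁ ∈ C' := (hcov h).resolve_left huC
        refine ih hc' (Or.inr ⟨hv₁B, hv₁C, fun f hf => ?_⟩) v hv' hvA
        have := hrel f hf; tauto
    · have hsm : s(u,v₁) ∈ M := hm _ rfl
      rcases List.mem_cons.1 hv with rfl | hv'
      · exact (notAB hbip hvA huB).elim
      · have hv₁A : v₁ ∈ A := adjBA hbip h huB
        have hv₁C : v₁ ∉ C' := hone _ hsm u (by simp) v₁ (by simp) h.ne huC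
        refine ih hc' (Or.inl ⟨hv₁A, hv₁C, fun f hf => ?_⟩) v hv' hvA
        have := hrel f hf; tauto

lemma taketo : ∀ {u z : V} (p : G.Walk u z), p.IsPath → AlternatingEdges M p.edges →
    ∀ e ∈ p.edges, ∃ (w : V) (q : G.Walk u w), q.IsPath ∧ AlternatingEdges M q.edges ∧
      q.edges.getLast? = some e ∧ w ∈ e ∧ q.edges.head? = p.edges.head? ∧
      (∀ x ∈ q.support, x ∈ p.support) := by
  intro u z p
  induction p with
  | nil => intro _ _ e he; simp at he
  | @cons u v₁ z h r ih =>
    intro hp hc e he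
    have hpath' := ((Walk.cons_isPath_iff h r).1 hp).1
    have hu : u ∉ r.support := ((Walk.cons_isPath_iff h r).1 hp).2
    have hc' : List.Chain' (fun e f => (e ∈ M ↔ f ∉ M)) r.edges :=
      (List.isChain_cons.1 hc).2
    have hrel := (List.isChain_cons.1 hc).1
    rw [Walk.edges_cons] at he
    rcases List.mem_cons.1 he with rfl | he'
    · refine ⟨v₁, Walk.cons h Walk.nil, ?_, ?_, ?_, ?_, ?_, ?_⟩
      · rw [Walk.isPath_def]; simp [h.ne]
      · exact List.isChain_singleton _
      · simp
      · simp
      · simp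
      · intro x hx; simp at hx; rcases hx with rfl | rfl <;> simp
    · obtain ⟨w, q, hq1, hq2, hq3, hq4, hq5, hq6⟩ := ih hpath' hc' e he'
      have hqne : q.edges ≠ [] := by
        intro hnil; rw [hnil] at hq3; simp at hq3
      refine ⟨w, Walk.cons h q, ?_, ?_, ?_, hq4, ?_, ?_⟩
      · exact hq1.cons (fun hx => hu (hq6 u hx))
      · rw [AlternatingEdges, Walk.edges_cons]
        refine List.isChain_cons.2 ?_
        exact ⟨fun f hf => hrel f (show f ∈ r.edges.head? by rw [← hq5]; exact hf), hq2⟩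
      · rw [Walk.edges_cons]
        obtain ⟨c, t, hct⟩ := List.exists_cons_of_ne_nil hqne
        rw [hct] at hq3 ⊢
        rw [List.getLast?_cons_cons]
        exact hq3
      · simp
      · intro x hx
        rw [Walk.support_cons] at hx ⊢
        rcases List.mem_cons.1 hx with rfl | hx'
        · simp
        · exact List.mem_cons_of_mem _ (hq6 x hx')

theorem altcount (M : Set (Sym2 V)) :
    ∀ (a : Sym2 V) (t : List (Sym2 V)),
      List.Chain' (fun e f => (e ∈ M ↔ f ∉ M)) (a :: t) →
    ((a ∉ M → (∀ e ∈ (a :: t).getLast?, e ∉ M) →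
        (a :: t).countP (fun e => !decide (e ∈ M)) =
          (a :: t).countP (fun e => decide (e ∈ M)) + 1) ∧
     (a ∉ M → (∀ e ∈ (a :: t).getLast?, e ∈ M) →
        (a :: t).countP (fun e => !decide (e ∈ M)) =
          (a :: t).countP (fun e => decide (e ∈ M))) ∧
     (a ∈ M → (∀ e ∈ (a :: t).getLast?, e ∈ M) →
        (a :: t).countP (fun e => decide (e ∈ M)) =
          (a :: t).countP (fun e => !decide (e ∈ M)) + 1) ∧
     (a ∈ M → (∀ e ∈ (a :: t).getLast?, e ∉ M) →
        (a :: t).countP (fun e => decide (e ∈ M)) =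
          (a :: t).countP (fun e => !decide (e ∈ M))))
  | a, [] => by
    intro _
    refine ⟨?_, ?_, ?_, ?_⟩ <;> intro h1 h2
    · simp [List.countP_cons, h1]
    · exact absurd (h2 a (by simp)) h1
    · simp [List.countP_cons, h1]
    · exact absurd h1 (h2 a (by simp))
  | a, b :: t => by
    intro hc
    have hR : a ∈ M ↔ b ∉ M := (List.isChain_cons_cons.1 hc).1
    have hc' : List.Chain' (fun e f => (e ∈ M ↔ f ∉ M)) (b :: t) := (List.isChain_cons_cons.1 hc).2
    have IH := altcount M b t hc'
    have hlast : (a :: b :: t).getLast? = (b :: t).getLast? := List.getLast?_cons_cons ..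
    refine ⟨?_, ?_, ?_, ?_⟩ <;> intro h1 h2 <;> rw [hlast] at h2
    · have hb : b ∈ M := by tauto
      have IH' := IH.2.2.2 hb h2
      have ha1 : (decide (a ∈ M)) = false := by simp [h1]
      have hb1 := hb
      simp only [List.countP_cons] at IH' ⊢
      simp [ha1, hb1] at IH' ⊢ <;> omega
      
    · have hb : b ∈ M := by tauto
      have IH' := IH.2.2.1 hb h2
      have ha1 : (decide (a ∈ M)) = false := by simp [h1]
      have hb1 := hb
      simp only [List.countP_cons] at IH' ⊢
      simp [ha1, hb1] at IH' ⊢ <;> omega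
      
    · have hb : b ∉ M := by tauto
      have IH' := IH.2.1 hb h2
      have ha1 : (decide (a ∈ M)) = true := by simp [h1]
      have hb1 := hb
      simp only [List.countP_cons] at IH' ⊢
      simp [ha1, hb1] at IH' ⊢ <;> omega
      
    · have hb : b ∉ M := by tauto
      have IH' := IH.1 hb h2
      have ha1 : (decide (a ∈ M)) = true := by simp [h1]
      have hb1 := hb
      simp only [List.countP_cons] at IH' ⊢
      simp [ha1, hb1] at IH' ⊢ <;> omega
      


lemma ncard_list_filter {l : List (Sym2 V)} (hl : l.Nodup) (P : Sym2 V → Prop) :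
    {e | e ∈ l ∧ P e}.ncard = l.countP (fun e => decide (P e)) := by
  have h1 : {e | e ∈ l ∧ P e} =
      ((l.filter (fun e => decide (P e))).toFinset : Set (Sym2 V)) := by
    ext e; simp [List.mem_filter]
  rw [h1, Set.ncard_coe_finset, List.toFinset_card_of_nodup (hl.filter _),
    List.countP_eq_length_filter]

lemma augment [Fintype V] (hbip : IsBipartition G A B) (hM : IsMaxMatching G M) {u y : V}
    (q : G.Walk u y) (hq : q.IsPath) (halt : AlternatingEdges M q.edges)
    (huA : u ∈ A) (hus : ¬ MSaturated M u) (hys : ¬ MSaturated M y)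
    (hne : q.edges ≠ []) : False := by
  haveI : Finite (Sym2 V) := Finite.of_surjective (Quot.mk _) Quot.exists_rep
  set Qs : Set (Sym2 V) := {e | e ∈ q.edges ∧ e ∈ M} with hQsdef
  set Qc : Set (Sym2 V) := {e | e ∈ q.edges ∧ e ∉ M} with hQcdef
  set M' : Set (Sym2 V) := (M \ Qs) ∪ Qc with hM'def
  have hphase : (u ∈ A ∧ ∀ f ∈ q.edges.head?, f ∉ M) ∨
      (u ∈ B ∧ ∀ f ∈ q.edges.head?, f ∈ M) := Or.inl ⟨huA, head_notM q hus⟩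
  have hmatch : IsMatching' G M' := by
    constructor
    · rintro e (⟨heM, -⟩ | ⟨heq, -⟩)
      · exact hM.1.1 heM
      · exact q.edges_subset_edgeSet heq
    · have main : ∀ g ∈ M, g ∉ q.edges → ∀ w ∈ g, w ∉ q.support := by
        intro g hg hgq w hwg hws
        rcases mem_A_or_B hbip w with hwA | hwB
        · rcases asat hbip q halt hphase w hws hwA with rfl | ⟨g', hg', hg'M, hwg'⟩
          · exact hus ⟨g, hg, hwg⟩
          · exact hgq (by rw [unique_edge hM.1 hg hg'M hwg hwg']; exact hg')
        · rcases bsat hbip q halt hphase w hws hwB with rfl | ⟨g', hg', hg'M, hwg'⟩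
          · exact hys ⟨g, hg, hwg⟩
          · exact hgq (by rw [unique_edge hM.1 hg hg'M hwg hwg']; exact hg')
      rintro e he f hf hef v ⟨hve, hvf⟩
      rcases he with ⟨heM, heq⟩ | ⟨heq, heM⟩ <;> rcases hf with ⟨hfM, hfq⟩ | ⟨hfq, hfM⟩
      · exact hM.1.2 e heM f hfM hef v ⟨hve, hvf⟩
      · exact main e heM (fun h => heq ⟨h, heM⟩) v hve (mem_support_of_edge hfq hvf)
      · exact main f hfM (fun h => hfq ⟨h, hfM⟩) v hvf (mem_support_of_edge heq hve)
      · have := shared q hq halt e heq f hfq hef v hve hvf; tauto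
  have hfinM : M.Finite := Set.toFinite M
  have hQsM : Qs ⊆ M := fun e he => he.2
  have hdisj : Disjoint (M \ Qs) Qc := by
    rw [Set.disjoint_left]; rintro e ⟨heM, -⟩ ⟨-, heM'⟩; exact heM' heM
  have hcard1 : M'.ncard = (M \ Qs).ncard + Qc.ncard :=
    Set.ncard_union_eq hdisj (Set.toFinite _) (Set.toFinite _)
  have hcard2 : (M \ Qs).ncard = M.ncard - Qs.ncard := Set.ncard_diff hQsM (Set.toFinite _)
  have hQsle : Qs.ncard ≤ M.ncard := Set.ncard_le_ncard hQsM hfinM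
  have hnodup : q.edges.Nodup := hq.isTrail.edges_nodup
  have hQsc : Qs.ncard = q.edges.countP (fun e => decide (e ∈ M)) :=
    ncard_list_filter hnodup _
  have hQcc : Qc.ncard = q.edges.countP (fun e => !decide (e ∈ M)) := by
    have h0 := ncard_list_filter hnodup (fun e => e ∉ M)
    simp only [decide_not] at h0
    exact h0
  obtain ⟨a, t, hat⟩ := List.exists_cons_of_ne_nil hne
  have hheadn : a ∉ M := by
    have h1 := head_notM q hus
    rw [hat] at h1
    exact h1 a rfl
  have hlastn : ∀ e ∈ q.edges.getLast?, e ∉ M :=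
    fun e hel hfM => hys ⟨e, hfM, last_mem_end q e hel⟩
  have hcount := (altcount M a t (by rw [← hat]; exact halt)).1 hheadn
    (by rw [← hat]; exact hlastn)
  have h3 : Qc.ncard = Qs.ncard + 1 := by
    rw [hQsc, hQcc, hat]
    exact hcount
  have hle := hM.2 M' hmatch
  omega

lemma mem_koenig_B {b : V} (hb : b ∈ B) {e : Sym2 V} (he : e ∈ M) (hbe : b ∈ e)
    (halt : OnAltPath G M A e) : b ∈ koenigCoverFrom G M A B :=
  Or.inl ⟨hb, e, he, hbe, halt⟩

lemma mem_koenig_A {a : V} (ha : a ∈ A) {e : Sym2 V} (he : e ∈ M) (hae : a ∈ e)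
    (halt : ¬ OnAltPath G M A e) : a ∈ koenigCoverFrom G M A B :=
  Or.inr ⟨ha, e, he, hae, halt⟩

lemma cover_aux [Fintype V] (hbip : IsBipartition G A B) (hM : IsMaxMatching G M)
    {x y : V} (h : G.Adj x y) (hx : x ∈ A) (hy : y ∈ B) :
    x ∈ koenigCoverFrom G M A B ∨ y ∈ koenigCoverFrom G M A B := by
  by_contra hcon
  push_neg at hcon
  obtain ⟨hxC, hyC⟩ := hcon
  -- an alternating path from an unsaturated vertex of A ending at x whose last edge is in M
  have hq0 : ∃ (u₀ : V) (q₀ : G.Walk u₀ x), u₀ ∈ A ∧ ¬ MSaturated M u₀ ∧ q₀.IsPath ∧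
      AlternatingEdges M q₀.edges ∧ (∀ f ∈ q₀.edges.getLast?, f ∈ M) := by
    by_cases hsat : MSaturated M x
    · obtain ⟨ex, hexM, hxex⟩ := hsat
      have honalt : OnAltPath G M A ex := by
        by_contra hno
        exact hxC (mem_koenig_A hx hexM hxex hno)
      obtain ⟨u₀, z, p, hu₀A, hu₀s, hp, haltp, hep⟩ := honalt
      obtain ⟨w, q, hq1, hq2, hq3, hq4, hq5, hq6⟩ := taketo p hp haltp ex hep
      have hphase : (u₀ ∈ A ∧ ∀ f ∈ q.edges.head?, f ∉ M) ∨
          (u₀ ∈ B ∧ ∀ f ∈ q.edges.head?, f ∈ M) := Or.inl ⟨hu₀A, head_notM q hu₀s⟩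
      have hwA : w ∈ A := (lastA hbip q hq2 hphase ex hq3).1 hexM
      obtain ⟨b, hexeq, hadj⟩ := sym2_rep (hM.1.1 hexM) hxex
      have hbB : b ∈ B := adjAB hbip hadj hx
      have hwx : w = x := by
        have hwe : w ∈ ex := hq4
        rw [hexeq] at hwe
        rcases Sym2.mem_iff.1 hwe with h1 | h1
        · exact h1
        · exact ((notAB hbip hwA (h1 ▸ hbB)).elim)
      subst hwx
      exact ⟨u₀, q, hu₀A, hu₀s, hq1, hq2, fun f hf => by
        rw [hq3] at hf
        obtain rfl : ex = f := by simpa using hf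
        exact hexM⟩
    · exact ⟨x, SimpleGraph.Walk.nil, hx, hsat, SimpleGraph.Walk.IsPath.nil,
        List.isChain_nil, by simp⟩
  obtain ⟨u₀, q₀, hu₀A, hu₀s, hq₀p, hq₀alt, hq₀last⟩ := hq0
  have hphase₀ : (u₀ ∈ A ∧ ∀ f ∈ q₀.edges.head?, f ∉ M) ∨
      (u₀ ∈ B ∧ ∀ f ∈ q₀.edges.head?, f ∈ M) := Or.inl ⟨hu₀A, head_notM q₀ hu₀s⟩
  have hxyM : s(x,y) ∉ M := by
    intro hmem
    have honalt : OnAltPath G M A s(x,y) := by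
      by_contra hno
      exact hxC (mem_koenig_A hx hmem (Sym2.mem_mk_left _ _) hno)
    exact hyC (mem_koenig_B hy hmem (Sym2.mem_mk_right _ _) honalt)
  have hyn : y ∉ q₀.support := by
    intro hys
    rcases bsat hbip q₀ hq₀alt hphase₀ y hys hy with rfl | ⟨f, hf, hfM, hyf⟩
    · exact notAB hbip hx hy
    · exact hyC (mem_koenig_B hy hfM hyf ⟨u₀, x, q₀, hu₀A, hu₀s, hq₀p, hq₀alt, hf⟩)
  have hq₁p : (q₀.concat h).IsPath := isPath_concat hq₀p h hyn
  have hq₁e : (q₀.concat h).edges = q₀.edges ++ [s(x,y)] := by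
    rw [SimpleGraph.Walk.edges_concat, List.concat_eq_append]
  have hq₁alt : AlternatingEdges M (q₀.concat h).edges := by
    rw [AlternatingEdges, hq₁e]
    refine List.IsChain.append hq₀alt (List.isChain_singleton _) ?_
    intro e he f hf
    simp only [List.head?_cons, Option.mem_def, Option.some.injEq] at hf
    subst hf
    have := hq₀last e he
    tauto
  have hq₁head : ∀ f ∈ (q₀.concat h).edges.head?, f ∉ M := head_notM _ hu₀s
  have hq₁phase : (u₀ ∈ A ∧ ∀ f ∈ (q₀.concat h).edges.head?, f ∉ M) ∨
      (u₀ ∈ B ∧ ∀ f ∈ (q₀.concat h).edges.head?, f ∈ M) := Or.inl ⟨hu₀A, hq₁head⟩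
  have hxyq₁ : s(x,y) ∈ (q₀.concat h).edges := by rw [hq₁e]; simp
  by_cases hysat : MSaturated M y
  · obtain ⟨f, hfM, hyf⟩ := hysat
    obtain ⟨w', hfeq, hadj'⟩ := sym2_rep (hM.1.1 hfM) hyf
    have hw'A : w' ∈ A := adjBA hbip hadj' hy
    by_cases hw's : w' ∈ (q₀.concat h).support
    · rcases asat hbip (q₀.concat h) hq₁alt hq₁phase w' hw's hw'A with
        rfl | ⟨g, hg, hgM, hw'g⟩
      · exact hu₀s ⟨f, hfM, by rw [hfeq]; exact Sym2.mem_mk_right _ _⟩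
      · have hgf : g = f :=
          unique_edge hM.1 hgM hfM hw'g (by rw [hfeq]; exact Sym2.mem_mk_right _ _)
        exact hyC (mem_koenig_B hy hfM hyf
          ⟨u₀, y, q₀.concat h, hu₀A, hu₀s, hq₁p, hq₁alt, hgf ▸ hg⟩)
    · have hq₂p : ((q₀.concat h).concat hadj').IsPath := isPath_concat hq₁p hadj' hw's
      have hq₂e : ((q₀.concat h).concat hadj').edges = (q₀.concat h).edges ++ [s(y,w')] := by
        rw [SimpleGraph.Walk.edges_concat, List.concat_eq_append]
      have hq₂alt : AlternatingEdges M ((q₀.concat h).concat hadj').edges := by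
        rw [AlternatingEdges, hq₂e]
        refine List.IsChain.append hq₁alt (List.isChain_singleton _) ?_
        intro e he f' hf'
        simp only [List.head?_cons, Option.mem_def, Option.some.injEq] at hf'
        subst hf'
        have hlast : (q₀.concat h).edges.getLast? = some s(x,y) := by
          rw [hq₁e]; exact List.getLast?_concat
        rw [hlast] at he
        obtain rfl : s(x,y) = e := by simpa using he
        have hyw'M : s(y,w') ∈ M := by rw [← hfeq]; exact hfM
        tauto
      have hfin : f ∈ ((q₀.concat h).concat hadj').edges := by
        rw [hq₂e, hfeq]; simp
      exact hyC (mem_koenig_B hy hfM hyf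
        ⟨u₀, w', (q₀.concat h).concat hadj', hu₀A, hu₀s, hq₂p, hq₂alt, hfin⟩)
  · exact augment hbip hM (q₀.concat h) hq₁p hq₁alt hu₀A hu₀s hysat
      (by rw [hq₁e]; simp)

lemma koenig_isCover [Fintype V] (hbip : IsBipartition G A B) (hM : IsMaxMatching G M) :
    _root_.IsVertexCover G (koenigCoverFrom G M A B) := by
  intro u v h
  rcases hbip.2.2 h with ⟨huA, hvB⟩ | ⟨huB, hvA⟩
  · exact cover_aux hbip hM h huA hvB
  · exact (cover_aux hbip hM h.symm hvA huB).symm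

lemma koenig_card_le [Fintype V] (hbip : IsBipartition G A B) (hM : IsMaxMatching G M) :
    (koenigCoverFrom G M A B).ncard ≤ M.ncard := by
  haveI : Finite (Sym2 V) := Finite.of_surjective (Quot.mk _) Quot.exists_rep
  set C := koenigCoverFrom G M A B with hC
  have hex : ∀ v ∈ C, ∃ e, e ∈ M ∧ v ∈ e := by
    rintro v (⟨-, e, he, hv, -⟩ | ⟨-, e, he, hv, -⟩) <;> exact ⟨e, he, hv⟩
  rcases Set.eq_empty_or_nonempty C with hCe | ⟨v0, hv0⟩
  · rw [hCe]; simp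
  · obtain ⟨e0, -, -⟩ := hex v0 hv0
    haveI : Nonempty (Sym2 V) := ⟨e0⟩
    choose! ψ hψM hψv using hex
    have hbranch : ∀ v ∈ C, (v ∈ B ∧ OnAltPath G M A (ψ v)) ∨
        (v ∈ A ∧ ¬ OnAltPath G M A (ψ v)) := by
      rintro v (⟨hvB, e, he, hv, halt⟩ | ⟨hvA, e, he, hv, halt⟩)
      · left
        refine ⟨hvB, ?_⟩
        rwa [unique_edge hM.1 (hψM v (Or.inl ⟨hvB, e, he, hv, halt⟩)) he
          (hψv v (Or.inl ⟨hvB, e, he, hv, halt⟩)) hv]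
      · right
        refine ⟨hvA, ?_⟩
        rwa [unique_edge hM.1 (hψM v (Or.inr ⟨hvA, e, he, hv, halt⟩)) he
          (hψv v (Or.inr ⟨hvA, e, he, hv, halt⟩)) hv]
    have hinj : Set.InjOn ψ C := by
      intro v₁ h₁ v₂ h₂ heq
      by_contra hne
      have hv₁ : v₁ ∈ ψ v₁ := hψv v₁ h₁
      have hv₂ : v₂ ∈ ψ v₁ := heq ▸ hψv v₂ h₂
      obtain ⟨w, hw, hadj⟩ := sym2_rep (hM.1.1 (hψM v₁ h₁)) hv₁
      have hv₂w : v₂ = w := by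
        rw [hw] at hv₂
        rcases Sym2.mem_iff.1 hv₂ with h' | h'
        · exact (hne h'.symm).elim
        · exact h'
      subst hv₂w
      have hadj12 : G.Adj v₁ v₂ := hadj
      rcases hbranch v₁ h₁ with ⟨hB₁, hOn₁⟩ | ⟨hA₁, hOn₁⟩ <;>
        rcases hbranch v₂ h₂ with ⟨hB₂, hOn₂⟩ | ⟨hA₂, hOn₂⟩
      · rcases hbip.2.2 hadj12 with ⟨hA, -⟩ | ⟨-, hA⟩
        · exact notAB hbip hA hB₁
        · exact notAB hbip hA hB₂
      · rw [heq] at hOn₁; exact hOn₂ hOn₁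
      · rw [heq] at hOn₁; exact hOn₁ hOn₂
      · rcases hbip.2.2 hadj12 with ⟨-, hB⟩ | ⟨hB, -⟩
        · exact notAB hbip hA₂ hB
        · exact notAB hbip hA₁ hB
    calc C.ncard = (ψ '' C).ncard := (Set.ncard_image_of_injOn hinj).symm
      _ ≤ M.ncard := Set.ncard_le_ncard
          (by rintro _ ⟨v, hv, rfl⟩; exact hψM v hv) (Set.toFinite M)

end KoenigAux

/-- For a finite bipartite graph `G` with bipartition `(A,B)` and
a maximum matching `M`, letting `C*` be the `A`-König cover of `G` constructed
from `M`, every minimum vertex cover `C'` of `G` satisfies `A ∩ C' ⊆ A ∩ C*`. -/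
theorem inter_subset_koenigCoverFrom {V : Type} [Fintype V] (G : SimpleGraph V)
    (A B : Set V) (hbip : IsBipartition G A B)
    (M : Set (Sym2 V)) (hM : IsMaxMatching G M)
    (C' : Set V) (hC' : IsMinVertexCover G C') :
    A ∩ C' ⊆ A ∩ koenigCoverFrom G M A B := by
  classical
  obtain ⟨hcov', hmin'⟩ := hC'
  have hcovS : _root_.IsVertexCover G (koenigCoverFrom G M A B) :=
    KoenigAux.koenig_isCover hbip hM
  have hcard : C'.ncard ≤ M.ncard :=
    le_trans (hmin' _ hcovS) (KoenigAux.koenig_card_le hbip hM)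
  rintro a ⟨haA, haC⟩
  haveI : Nonempty V := ⟨a⟩
  -- choose a covered endpoint for each edge of M
  have hexφ : ∀ e ∈ M, ∃ v, v ∈ e ∧ v ∈ C' := by
    intro e he
    induction e using Sym2.inductionOn with
    | hf x y =>
      rcases hcov' (hM.1.1 he : s(x,y) ∈ G.edgeSet) with hx | hy
      · exact ⟨x, Sym2.mem_mk_left _ _, hx⟩
      · exact ⟨y, Sym2.mem_mk_right _ _, hy⟩
  choose! φ hφe hφC using hexφ
  have hinjφ : Set.InjOn φ M := by
    intro e he f hf heq
    exact KoenigAux.unique_edge hM.1 he hf (hφe e he) (by rw [heq]; exact hφe f hf)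
  have himg : φ '' M = C' := by
    apply Set.eq_of_subset_of_ncard_le
    · rintro _ ⟨e, he, rfl⟩; exact hφC e he
    · rw [Set.ncard_image_of_injOn hinjφ]; exact hcard
    · exact Set.toFinite C'
  have hsatC : ∀ v ∈ C', ∃ e ∈ M, v ∈ e := by
    intro v hv
    rw [← himg] at hv
    obtain ⟨e, he, rfl⟩ := hv
    exact ⟨e, he, hφe e he⟩
  have hone : ∀ e ∈ M, ∀ x ∈ e, ∀ y ∈ e, x ≠ y → x ∈ C' → y ∉ C' := by
    intro e he x hx y hy hne hxC hyC
    rw [← himg] at hxC hyC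
    obtain ⟨e₁, he₁, rfl⟩ := hxC
    obtain ⟨e₂, he₂, rfl⟩ := hyC
    have h1 : e₁ = e := KoenigAux.unique_edge hM.1 he₁ he (hφe e₁ he₁) hx
    have h2 : e₂ = e := KoenigAux.unique_edge hM.1 he₂ he (hφe e₂ he₂) hy
    subst h1; subst h2
    exact hne rfl
  refine ⟨haA, ?_⟩
  obtain ⟨e, heM, hae⟩ := hsatC a haC
  refine KoenigAux.mem_koenig_A haA heM hae ?_
  rintro ⟨u₀, z, p, hu₀A, hu₀s, hp, halt, hep⟩
  have hu₀C : u₀ ∉ C' := by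
    intro hc
    obtain ⟨e', he', hv'⟩ := hsatC u₀ hc
    exact hu₀s ⟨e', he', hv'⟩
  have := KoenigAux.key hbip hcov' hone p halt
    (Or.inl ⟨hu₀A, hu₀C, KoenigAux.head_notM p hu₀s⟩) a
    (KoenigAux.mem_support_of_edge hep hae) haA
  exact this haC
end

section
/- Let G be a finite simple graph and let (A,B,X) be a partition of V(G) into three pairwise disjoint (possibly empty) sets. Let C_A be the A-König cover of the bipartite graph G[A, B ∪ X], and let C be any minimum vertex cover of the bipartite graph G[A ∪ X, B]. Then B ∩ C_A ⊆ B ∩ C. -/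
open SimpleGraph

/-- For a tripartition `(A,B,X)` of the vertices of `G`, the
`A`-König cover `C_A` of `G[A, B ∪ X]` and any minimum vertex cover `C` of
`G[A ∪ X, B]` satisfy `B ∩ C_A ⊆ B ∩ C`. -/
theorem inter_B_koenig_subset {V : Type} [Fintype V] (G : SimpleGraph V)
    (A B X : Set V)
    (hAB : Disjoint A B) (hAX : Disjoint A X) (hBX : Disjoint B X)
    (hU : A ∪ B ∪ X = Set.univ)
    (CA : Set V) (hCA : IsKoenigCover (crossingGraph G A (B ∪ X)) A (B ∪ X) CA)
    (C : Set V) (hC : IsMinVertexCover (crossingGraph G (A ∪ X) B) C) :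
    B ∩ CA ⊆ B ∩ C := by
  classical
  obtain ⟨⟨hCAcov, hCAmin⟩, hCAkoenig⟩ := hCA
  obtain ⟨hCcov, hCmin⟩ := hC
  set s1 := A ∩ C with hs1
  set t1 := A ∩ CA with ht1
  set s2 := B ∩ C with hs2
  set t2 := B ∩ CA with ht2
  set s3 := X ∩ C with hs3
  set t3 := X ∩ CA with ht3
  set C' : Set V := ((s1 ∪ t1) ∪ (s2 ∩ t2)) ∪ t3 with hC'def
  set C'' : Set V := ((s1 ∩ t1) ∪ (s2 ∪ t2)) ∪ s3 with hC''def
  -- C' is a vertex cover of G[A, B ∪ X]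
  have key1 : ∀ u v : V, G.Adj u v → u ∈ A → v ∈ B ∪ X → u ∈ C' ∨ v ∈ C' := by
    intro u v hadj hu hv
    rcases hv with hvB | hvX
    · have h2 := hCcov ⟨hadj, Or.inl ⟨Or.inl hu, hvB⟩⟩
      have h1 := hCAcov ⟨hadj, Or.inl ⟨hu, Or.inl hvB⟩⟩
      rcases h1 with huCA | hvCA
      · exact Or.inl (Or.inl (Or.inl (Or.inr ⟨hu, huCA⟩)))
      · rcases h2 with huC | hvC
        · exact Or.inl (Or.inl (Or.inl (Or.inl ⟨hu, huC⟩)))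
        · exact Or.inr (Or.inl (Or.inr ⟨⟨hvB, hvC⟩, hvB, hvCA⟩))
    · have h1 := hCAcov ⟨hadj, Or.inl ⟨hu, Or.inr hvX⟩⟩
      rcases h1 with huCA | hvCA
      · exact Or.inl (Or.inl (Or.inl (Or.inr ⟨hu, huCA⟩)))
      · exact Or.inr (Or.inr ⟨hvX, hvCA⟩)
  have hcov1 : _root_.IsVertexCover (crossingGraph G A (B ∪ X)) C' := by
    rintro u v ⟨hadj, hside | hside⟩
    · exact key1 u v hadj hside.1 hside.2
    · exact (key1 v u hadj.symm hside.2 hside.1).symm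
  -- C'' is a vertex cover of G[A ∪ X, B]
  have key2 : ∀ u v : V, G.Adj u v → u ∈ A ∪ X → v ∈ B → u ∈ C'' ∨ v ∈ C'' := by
    intro u v hadj hu hvB
    rcases hu with huA | huX
    · have h2 := hCcov ⟨hadj, Or.inl ⟨Or.inl huA, hvB⟩⟩
      have h1 := hCAcov ⟨hadj, Or.inl ⟨huA, Or.inl hvB⟩⟩
      rcases h2 with huC | hvC
      · rcases h1 with huCA | hvCA
        · exact Or.inl (Or.inl (Or.inl ⟨⟨huA, huC⟩, huA, huCA⟩))
        · exact Or.inr (Or.inl (Or.inr (Or.inr ⟨hvB, hvCA⟩)))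
      · exact Or.inr (Or.inl (Or.inr (Or.inl ⟨hvB, hvC⟩)))
    · have h2 := hCcov ⟨hadj, Or.inl ⟨Or.inr huX, hvB⟩⟩
      rcases h2 with huC | hvC
      · exact Or.inl (Or.inr ⟨huX, huC⟩)
      · exact Or.inr (Or.inl (Or.inr (Or.inl ⟨hvB, hvC⟩)))
  have hcov2 : _root_.IsVertexCover (crossingGraph G (A ∪ X) B) C'' := by
    rintro u v ⟨hadj, hside | hside⟩
    · exact key2 u v hadj hside.1 hside.2
    · exact (key2 v u hadj.symm hside.2 hside.1).symm
  -- cardinality bookkeeping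
  have dAB : ∀ s t : Set V, s ⊆ A → t ⊆ B → Disjoint s t :=
    fun s t hs ht => hAB.mono hs ht
  have dABX : ∀ s t : Set V, s ⊆ A ∪ B → t ⊆ X → Disjoint s t := by
    intro s t hs ht
    exact (Disjoint.union_left hAX hBX).mono hs ht
  have hsplit : ∀ D : Set V, D = ((A ∩ D) ∪ (B ∩ D)) ∪ (X ∩ D) := by
    intro D
    rw [← Set.union_inter_distrib_right, ← Set.union_inter_distrib_right, hU,
      Set.univ_inter]
  have ncard3 : ∀ P Q R : Set V, P ⊆ A → Q ⊆ B → R ⊆ X →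
      ((P ∪ Q) ∪ R).ncard = P.ncard + Q.ncard + R.ncard := by
    intro P Q R hP hQ hR
    rw [Set.ncard_union_eq (dABX _ _ (Set.union_subset (hP.trans Set.subset_union_left)
        (hQ.trans Set.subset_union_right)) hR) (Set.toFinite _) (Set.toFinite _),
      Set.ncard_union_eq (dAB _ _ hP hQ) (Set.toFinite _) (Set.toFinite _)]
  have hCAcard : CA.ncard = t1.ncard + t2.ncard + t3.ncard := by
    conv_lhs => rw [hsplit CA]
    exact ncard3 _ _ _ Set.inter_subset_left Set.inter_subset_left Set.inter_subset_left
  have hCcard : C.ncard = s1.ncard + s2.ncard + s3.ncard := by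
    conv_lhs => rw [hsplit C]
    exact ncard3 _ _ _ Set.inter_subset_left Set.inter_subset_left Set.inter_subset_left
  have hC'card : C'.ncard = (s1 ∪ t1).ncard + (s2 ∩ t2).ncard + t3.ncard :=
    ncard3 _ _ _ (Set.union_subset Set.inter_subset_left Set.inter_subset_left)
      (Set.inter_subset_left.trans Set.inter_subset_left) Set.inter_subset_left
  have hC''card : C''.ncard = (s1 ∩ t1).ncard + (s2 ∪ t2).ncard + s3.ncard :=
    ncard3 _ _ _ (Set.inter_subset_left.trans Set.inter_subset_left)
      (Set.union_subset Set.inter_subset_left Set.inter_subset_left) Set.inter_subset_left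
  have hie1 : (s1 ∪ t1).ncard + (s1 ∩ t1).ncard = s1.ncard + t1.ncard :=
    Set.ncard_union_add_ncard_inter s1 t1 (Set.toFinite _) (Set.toFinite _)
  have hie2 : (s2 ∪ t2).ncard + (s2 ∩ t2).ncard = s2.ncard + t2.ncard :=
    Set.ncard_union_add_ncard_inter s2 t2 (Set.toFinite _) (Set.toFinite _)
  have hle1 : CA.ncard ≤ C'.ncard := hCAmin C' hcov1
  have hle2 : C.ncard ≤ C''.ncard := hCmin C'' hcov2
  have hC'le : C'.ncard ≤ CA.ncard := by omega
  have hminC' : IsMinVertexCover (crossingGraph G A (B ∪ X)) C' :=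
    ⟨hcov1, fun D hD => hC'le.trans (hCAmin D hD)⟩
  intro v hv
  have hvC' : v ∈ C' := ((hCAkoenig C' hminC').2 ⟨Or.inl hv.1, hv.2⟩).2
  refine ⟨hv.1, ?_⟩
  rcases hvC' with ((h | h) | h) | h
  · exact absurd hv.1 (Set.disjoint_left.mp hAB h.1)
  · exact absurd hv.1 (Set.disjoint_left.mp hAB h.1)
  · exact h.1.2
  · exact absurd h.1 (Set.disjoint_left.mp hBX hv.1)
end

section
/- Let G be a finite simple graph whose vertex set is partitioned into disjoint sets A, B, and {x}. Let C be a minimum vertex cover of the bipartite graph G[A ∪ {x}, B] and let C' be the A-König cover of the bipartite graph G[A, B]. Then A ∩ C ⊆ A ∩ C'. -/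
open SimpleGraph

/-- For a partition of the vertices of `G` into `A`, `B` and
`{x}`, a minimum vertex cover `C` of `G[A ∪ {x}, B]` and the `A`-König cover `C'`
of `G[A, B]` satisfy `A ∩ C ⊆ A ∩ C'`. -/
theorem single_inter_A_subset {V : Type} [Fintype V] (G : SimpleGraph V)
    (A B : Set V) (x : V)
    (hAB : Disjoint A B) (hxA : x ∉ A) (hxB : x ∉ B)
    (hU : A ∪ B ∪ {x} = Set.univ)
    (C : Set V) (hC : IsMinVertexCover (crossingGraph G (A ∪ {x}) B) C)
    (C' : Set V) (hC' : IsKoenigCover (crossingGraph G A B) A B C') :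
    A ∩ C ⊆ A ∩ C' := by
  intro a ha
  obtain ⟨haA, haC⟩ := ha
  obtain ⟨⟨hC'cov, hC'min⟩, hC'max⟩ := hC'
  obtain ⟨hCcov, hCmin⟩ := hC
  -- side membership facts for edges of the small graph
  have hside : ∀ {u v : V}, (crossingGraph G A B).Adj u v → u ≠ x ∧ v ≠ x := by
    rintro u v ⟨-, ⟨h1, h2⟩ | ⟨h1, h2⟩⟩
    · exact ⟨fun e => hxA (e ▸ h1), fun e => hxB (e ▸ h2)⟩
    · exact ⟨fun e => hxB (e ▸ h1), fun e => hxA (e ▸ h2)⟩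
  -- small graph edges are big graph edges
  have hHH' : ∀ {u v : V}, (crossingGraph G A B).Adj u v →
      (crossingGraph G (A ∪ {x}) B).Adj u v := by
    rintro u v ⟨hadj, h⟩
    exact ⟨hadj, h.imp (fun h' => ⟨Or.inl h'.1, h'.2⟩) (fun h' => ⟨h'.1, Or.inl h'.2⟩)⟩
  -- x is not in C'
  have hxC' : x ∉ C' := by
    intro hx
    have hcov : _root_.IsVertexCover (crossingGraph G A B) (C' \ {x}) := by
      intro u v h
      obtain ⟨hu, hv⟩ := hside h
      rcases hC'cov h with h' | h'
      · exact Or.inl ⟨h', hu⟩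
      · exact Or.inr ⟨h', hv⟩
    have h1 := hC'min _ hcov
    have h2 := Set.ncard_diff_singleton_lt_of_mem hx C'.toFinite
    omega
  set t := C'.ncard with ht
  -- C covers the small graph
  have hCcovH : _root_.IsVertexCover (crossingGraph G A B) C := fun u v h => hCcov (hHH' h)
  have ht_le : t ≤ C.ncard := hC'min C hCcovH
  -- C' ∪ {x} covers the big graph
  have hC2cov : _root_.IsVertexCover (crossingGraph G (A ∪ {x}) B) (C' ∪ {x}) := by
    rintro u v ⟨hadj, h⟩
    by_cases hux : u = x
    · exact Or.inl (Or.inr (by simp [hux]))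
    by_cases hvx : v = x
    · exact Or.inr (Or.inr (by simp [hvx]))
    have hH : (crossingGraph G A B).Adj u v := by
      refine ⟨hadj, ?_⟩
      rcases h with ⟨h1, h2⟩ | ⟨h1, h2⟩
      · exact Or.inl ⟨h1.resolve_right (by simpa using hux), h2⟩
      · exact Or.inr ⟨h1, h2.resolve_right (by simpa using hvx)⟩
    exact (hC'cov hH).imp Or.inl Or.inl
  have hC2card : (C' ∪ {x}).ncard = t + 1 := by
    rw [Set.union_singleton, Set.ncard_insert_of_notMem hxC' C'.toFinite]
  have hle2 : C.ncard ≤ t + 1 := by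
    have := hCmin _ hC2cov
    omega
  rcases eq_or_lt_of_le ht_le with hcase | hcase
  · -- C is already a minimum cover of the small graph
    have hmin : IsMinVertexCover (crossingGraph G A B) C :=
      ⟨hCcovH, fun D hD => by rw [← hcase]; exact hC'min D hD⟩
    exact (hC'max C hmin).1 ⟨haA, haC⟩
  · have hCcard : C.ncard = t + 1 := by omega
    -- lattice combination of the two minimum covers C and C' ∪ {x}
    set S := A ∪ ({x} : Set V) with hS
    set C2 := C' ∪ ({x} : Set V) with hC2
    set S1 := S ∩ C with hS1
    set T1 := B ∩ C with hT1
    set S2 := S ∩ C2 with hS2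
    set T2 := B ∩ C2 with hT2
    have hSB : Disjoint S B :=
      Set.disjoint_union_left.mpr ⟨hAB, Set.disjoint_singleton_left.mpr hxB⟩
    have hSBuniv : S ∪ B = Set.univ := by
      rw [← hU]; ext y; simp [hS]; tauto
    have hsplit : ∀ D : Set V, (S ∩ D) ∪ (B ∩ D) = D := by
      intro D
      rw [← Set.union_inter_distrib_right, hSBuniv, Set.univ_inter]
    set D := (S1 ∪ S2) ∪ (T1 ∩ T2) with hD
    set D' := (S1 ∩ S2) ∪ (T1 ∪ T2) with hD'
    -- D and D' are covers of the big graph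
    have hmemD : ∀ {u v : V}, (crossingGraph G (A ∪ {x}) B).Adj u v →
        u ∈ S → v ∈ B → u ∈ D ∨ v ∈ D := by
      intro u v h hu hv
      rcases hCcov h with h1 | h1
      · exact Or.inl (Or.inl (Or.inl ⟨hu, h1⟩))
      rcases hC2cov h with h2 | h2
      · exact Or.inl (Or.inl (Or.inr ⟨hu, h2⟩))
      · exact Or.inr (Or.inr ⟨⟨hv, h1⟩, ⟨hv, h2⟩⟩)
    have hDcov : _root_.IsVertexCover (crossingGraph G (A ∪ {x}) B) D := by
      intro u v h
      rcases h.2 with ⟨h1, h2⟩ | ⟨h1, h2⟩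
      · exact hmemD h h1 h2
      · exact (hmemD h.symm h2 h1).symm
    have hmemD' : ∀ {u v : V}, (crossingGraph G (A ∪ {x}) B).Adj u v →
        u ∈ S → v ∈ B → u ∈ D' ∨ v ∈ D' := by
      intro u v h hu hv
      rcases hCcov h with h1 | h1
      · rcases hC2cov h with h2 | h2
        · exact Or.inl (Or.inl ⟨⟨hu, h1⟩, ⟨hu, h2⟩⟩)
        · exact Or.inr (Or.inr (Or.inr ⟨hv, h2⟩))
      · exact Or.inr (Or.inr (Or.inl ⟨hv, h1⟩))
    have hD'cov : _root_.IsVertexCover (crossingGraph G (A ∪ {x}) B) D' := by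
      intro u v h
      rcases h.2 with ⟨h1, h2⟩ | ⟨h1, h2⟩
      · exact hmemD' h h1 h2
      · exact (hmemD' h.symm h2 h1).symm
    -- cardinality bookkeeping
    have hdisj1 : Disjoint (S1 ∪ S2) (T1 ∩ T2) :=
      (hSB.mono (Set.union_subset Set.inter_subset_left Set.inter_subset_left)
        (Set.inter_subset_left.trans Set.inter_subset_left))
    have hdisj2 : Disjoint (S1 ∩ S2) (T1 ∪ T2) :=
      (hSB.mono (Set.inter_subset_left.trans Set.inter_subset_left)
        (Set.union_subset Set.inter_subset_left Set.inter_subset_left))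
    have hcardC : S1.ncard + T1.ncard = C.ncard := by
      rw [← Set.ncard_union_eq (hSB.mono Set.inter_subset_left Set.inter_subset_left)
        S1.toFinite T1.toFinite, hsplit]
    have hcardC2 : S2.ncard + T2.ncard = C2.ncard := by
      rw [← Set.ncard_union_eq (hSB.mono Set.inter_subset_left Set.inter_subset_left)
        S2.toFinite T2.toFinite, hsplit]
    have hcardD : D.ncard = (S1 ∪ S2).ncard + (T1 ∩ T2).ncard :=
      Set.ncard_union_eq hdisj1 (S1 ∪ S2).toFinite (T1 ∩ T2).toFinite
    have hcardD' : D'.ncard = (S1 ∩ S2).ncard + (T1 ∪ T2).ncard :=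
      Set.ncard_union_eq hdisj2 (S1 ∩ S2).toFinite (T1 ∪ T2).toFinite
    have hSsum : (S1 ∪ S2).ncard + (S1 ∩ S2).ncard = S1.ncard + S2.ncard :=
      Set.ncard_union_add_ncard_inter S1 S2 S1.toFinite S2.toFinite
    have hTsum : (T1 ∪ T2).ncard + (T1 ∩ T2).ncard = T1.ncard + T2.ncard :=
      Set.ncard_union_add_ncard_inter T1 T2 T1.toFinite T2.toFinite
    have hDmin : C.ncard ≤ D.ncard := hCmin D hDcov
    have hD'min : C.ncard ≤ D'.ncard := hCmin D' hD'cov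
    have hDcard : D.ncard = t + 1 := by omega
    -- x ∈ D, remove it
    have hxD : x ∈ D := Or.inl (Or.inr ⟨Or.inr rfl, Or.inr rfl⟩)
    set E := D \ {x} with hE
    have hEcard : E.ncard = t := by
      rw [hE, Set.ncard_diff_singleton_of_mem hxD, hDcard]
      omega
    have hEcov : _root_.IsVertexCover (crossingGraph G A B) E := by
      intro u v h
      obtain ⟨hu, hv⟩ := hside h
      rcases hDcov (hHH' h) with h' | h'
      · exact Or.inl ⟨h', hu⟩
      · exact Or.inr ⟨h', hv⟩
    have hEmin : IsMinVertexCover (crossingGraph G A B) E :=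
      ⟨hEcov, fun F hF => by rw [hEcard]; exact hC'min F hF⟩
    have haE : a ∈ E := ⟨Or.inl (Or.inl ⟨Or.inl haA, haC⟩), fun e => hxA (e ▸ haA)⟩
    exact (hC'max E hEmin).1 ⟨haA, haE⟩
end

section
/- Let G be a finite simple graph whose vertex set is partitioned into disjoint sets A, B, and {x}. Let C' be the A-König cover of the bipartite graph G[A, B] and let C_A be the A-König cover of the bipartite graph G[A, B ∪ {x}]. Then A ∩ C' ⊆ A ∩ C_A. -/
open SimpleGraph

/-- For a partition of the vertices of `G` into `A`, `B` and
`{x}`, the `A`-König cover `C'` of `G[A, B]` and the `A`-König cover `C_A` of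
`G[A, B ∪ {x}]` satisfy `A ∩ C' ⊆ A ∩ C_A`. -/
theorem single_koenig_A_subset {V : Type} [Fintype V] (G : SimpleGraph V)
    (A B : Set V) (x : V)
    (hAB : Disjoint A B) (hxA : x ∉ A) (hxB : x ∉ B)
    (hU : A ∪ B ∪ {x} = Set.univ)
    (C' : Set V) (hC' : IsKoenigCover (crossingGraph G A B) A B C')
    (CA : Set V)
    (hCA : IsKoenigCover (crossingGraph G A (B ∪ {x})) A (B ∪ {x}) CA) :
    A ∩ C' ⊆ A ∩ CA := by
  classical
  set G1 := crossingGraph G A B with hG1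
  set G2 := crossingGraph G A (B ∪ {x}) with hG2
  -- every cover of G2 covers G1
  have hG12 : ∀ {C : Set V}, _root_.IsVertexCover G2 C → _root_.IsVertexCover G1 C := by
    intro C hC u v huv
    exact hC ⟨huv.1, huv.2.elim (fun h => Or.inl ⟨h.1, Or.inl h.2⟩)
      (fun h => Or.inr ⟨Or.inl h.1, h.2⟩)⟩
  -- edges of G1 avoid x
  have hne : ∀ {u v : V}, G1.Adj u v → u ≠ x := by
    intro u v huv
    rcases huv.2 with h | h
    · rintro rfl; exact hxA h.1
    · rintro rfl; exact hxB h.1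
  -- removing x from a cover of G1 still covers G1
  have hdel : ∀ {C : Set V}, _root_.IsVertexCover G1 C → _root_.IsVertexCover G1 (C \ {x}) := by
    intro C hC u v huv
    rcases hC huv with h | h
    · exact Or.inl ⟨h, hne huv⟩
    · exact Or.inr ⟨h, hne huv.symm⟩
  -- x ∉ C'
  have hxC' : x ∉ C' := by
    intro hx
    have h1 := hC'.1.2 _ (hdel hC'.1.1)
    have h2 : (C' \ {x}).ncard < C'.ncard :=
      Set.ncard_diff_singleton_lt_of_mem hx C'.toFinite
    omega
  -- C' ∪ {x} covers G2
  have hins : _root_.IsVertexCover G2 (insert x C') := by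
    intro u v huv
    rcases huv.2 with ⟨hu, hv⟩ | ⟨hu, hv⟩
    · rcases hv with hv | hv
      · rcases hC'.1.1 ⟨huv.1, Or.inl ⟨hu, hv⟩⟩ with h | h
        · exact Or.inl (Set.mem_insert_of_mem _ h)
        · exact Or.inr (Set.mem_insert_of_mem _ h)
      · exact Or.inr (hv ▸ Set.mem_insert _ _)
    · rcases hu with hu | hu
      · rcases hC'.1.1 ⟨huv.1, Or.inr ⟨hu, hv⟩⟩ with h | h
        · exact Or.inl (Set.mem_insert_of_mem _ h)
        · exact Or.inr (Set.mem_insert_of_mem _ h)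
      · exact Or.inl (hu ▸ Set.mem_insert _ _)
  have hinscard : (insert x C').ncard = C'.ncard + 1 :=
    Set.ncard_insert_of_notMem hxC' C'.toFinite
  -- ν1 ≤ ν2 ≤ ν1 + 1
  have hle : C'.ncard ≤ CA.ncard := hC'.1.2 _ (hG12 hCA.1.1)
  have hge : CA.ncard ≤ C'.ncard + 1 := by
    have := hCA.1.2 _ hins
    omega
  rcases Nat.lt_or_ge CA.ncard (C'.ncard + 1) with hcase | hcase
  · -- ν2 = ν1 case
    have heq : CA.ncard = C'.ncard := by omega
    -- x ∉ CA
    have hxCA : x ∉ CA := by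
      intro hx
      have h1 := hC'.1.2 _ (hdel (hG12 hCA.1.1))
      have h2 : (CA \ {x}).ncard < CA.ncard :=
        Set.ncard_diff_singleton_lt_of_mem hx CA.toFinite
      omega
    -- CA is a min cover of G1
    have hCAmin1 : IsMinVertexCover G1 CA :=
      ⟨hG12 hCA.1.1, fun D hD => heq ▸ hC'.1.2 D hD⟩
    have hsub : A ∩ CA ⊆ A ∩ C' := (hC'.2 CA hCAmin1).1
    -- C' covers G2
    have hC'2 : _root_.IsVertexCover G2 C' := by
      intro u v huv
      rcases huv.2 with ⟨hu, hv⟩ | ⟨hu, hv⟩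
      · rcases hv with hv | hv
        · exact hC'.1.1 ⟨huv.1, Or.inl ⟨hu, hv⟩⟩
        · -- v = x
          left
          rcases hCA.1.1 huv with h | h
          · exact (hsub ⟨hu, h⟩).2
          · exact absurd (hv ▸ h) hxCA
      · rcases hu with hu | hu
        · exact hC'.1.1 ⟨huv.1, Or.inr ⟨hu, hv⟩⟩
        · right
          rcases hCA.1.1 huv with h | h
          · exact absurd (hu ▸ h) hxCA
          · exact (hsub ⟨hv, h⟩).2
    have hC'min2 : IsMinVertexCover G2 C' :=
      ⟨hC'2, fun D hD => by have := hCA.1.2 D hD; omega⟩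
    exact (hCA.2 C' hC'min2).1
  · -- ν2 = ν1 + 1 case
    have heq : CA.ncard = C'.ncard + 1 := by omega
    have hmin : IsMinVertexCover G2 (insert x C') :=
      ⟨hins, fun D hD => by have := hCA.1.2 D hD; omega⟩
    have := (hCA.2 _ hmin).1
    intro a ha
    exact this ⟨ha.1, Set.mem_insert_of_mem _ ha.2⟩
end

section
/- Let G be a finite simple graph whose vertex set is partitioned into disjoint sets A, B, and {x}. Let C' be the A-König cover of the bipartite graph G[A, B] and let C_A be the A-König cover of the bipartite graph G[A, B ∪ {x}]. Then B ∩ C_A ⊆ B ∩ C'. -/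
open SimpleGraph

/-- For a partition of the vertices of `G` into `A`, `B` and
`{x}`, the `A`-König cover `C'` of `G[A, B]` and the `A`-König cover `C_A` of
`G[A, B ∪ {x}]` satisfy `B ∩ C_A ⊆ B ∩ C'`. -/
theorem single_koenig_B_subset {V : Type} [Fintype V] (G : SimpleGraph V)
    (A B : Set V) (x : V)
    (hAB : Disjoint A B) (hxA : x ∉ A) (hxB : x ∉ B)
    (hU : A ∪ B ∪ {x} = Set.univ)
    (C' : Set V) (hC' : IsKoenigCover (crossingGraph G A B) A B C')
    (CA : Set V)
    (hCA : IsKoenigCover (crossingGraph G A (B ∪ {x})) A (B ∪ {x}) CA) :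
    B ∩ CA ⊆ B ∩ C' := by
  -- Any cover of G[A, B∪{x}] covers G[A,B]
  have hsub : ∀ D : Set V, _root_.IsVertexCover (crossingGraph G A (B ∪ Set.singleton x)) D →
      _root_.IsVertexCover (crossingGraph G A B) D := by
    intro D hD u v huv
    apply hD
    exact ⟨huv.1, huv.2.elim (fun h => Or.inl ⟨h.1, Or.inl h.2⟩)
      (fun h => Or.inr ⟨Or.inl h.1, h.2⟩)⟩
  -- insert x C' covers G[A, B∪{x}]
  have hins : _root_.IsVertexCover (crossingGraph G A (B ∪ Set.singleton x)) (insert x C') := by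
    intro u v huv
    rcases huv.2 with ⟨hu, hv⟩ | ⟨hu, hv⟩
    · rcases hv with hv | hv
      · rcases hC'.1.1 ⟨huv.1, Or.inl ⟨hu, hv⟩⟩ with h | h
        · exact Or.inl (Or.inr h)
        · exact Or.inr (Or.inr h)
      · exact Or.inr (Or.inl hv)
    · rcases hu with hu | hu
      · rcases hC'.1.1 ⟨huv.1, Or.inr ⟨hu, hv⟩⟩ with h | h
        · exact Or.inl (Or.inr h)
        · exact Or.inr (Or.inr h)
      · exact Or.inl (Or.inl hu)
  have hCA1 : _root_.IsVertexCover (crossingGraph G A B) CA := hsub CA hCA.1.1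
  have hle : C'.ncard ≤ CA.ncard := hC'.1.2 CA hCA1
  by_cases hcase : CA.ncard ≤ C'.ncard
  · -- x ∉ CA
    have hxCA : x ∉ CA := by
      intro hx
      have hcov : _root_.IsVertexCover (crossingGraph G A B) (CA \ Set.singleton x) := by
        intro u v huv
        have hu : u ≠ x := by rintro rfl; exact (huv.2.elim (fun h => hxA h.1) (fun h => hxB h.1))
        have hv : v ≠ x := by rintro rfl; exact (huv.2.elim (fun h => hxB h.2) (fun h => hxA h.2))
        rcases hCA1 huv with h | h
        · exact Or.inl ⟨h, hu⟩
        · exact Or.inr ⟨h, hv⟩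
      have h1 : C'.ncard ≤ (CA \ Set.singleton x).ncard := hC'.1.2 _ hcov
      have h2 : (CA \ Set.singleton x).ncard < CA.ncard := by
        have : (CA \ {x}).ncard < CA.ncard :=
          Set.ncard_diff_singleton_lt_of_mem hx CA.toFinite
        exact this
      omega
    -- CA is a minimum cover of G[A,B]
    have hmin : IsMinVertexCover (crossingGraph G A B) CA :=
      ⟨hCA1, fun D hD => le_trans hcase (hC'.1.2 D hD)⟩
    have hAsub : A ∩ CA ⊆ A ∩ C' := (hC'.2 CA hmin).1
    -- C' covers G[A, B∪{x}]
    have hC'cov : _root_.IsVertexCover (crossingGraph G A (B ∪ Set.singleton x)) C' := by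
      intro u v huv
      rcases huv.2 with ⟨hu, hv⟩ | ⟨hu, hv⟩
      · rcases hv with hv | hv
        · exact hC'.1.1 ⟨huv.1, Or.inl ⟨hu, hv⟩⟩
        · rcases hCA.1.1 huv with h | h
          · exact Or.inl (hAsub ⟨hu, h⟩).2
          · exact absurd h (hv ▸ hxCA)
      · rcases hu with hu | hu
        · exact hC'.1.1 ⟨huv.1, Or.inr ⟨hu, hv⟩⟩
        · rcases hCA.1.1 huv with h | h
          · exact absurd h (hu ▸ hxCA)
          · exact Or.inr (hAsub ⟨hv, h⟩).2
    have hC'min : IsMinVertexCover (crossingGraph G A (B ∪ Set.singleton x)) C' :=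
      ⟨hC'cov, fun D hD => le_trans hle (hCA.1.2 D hD)⟩
    have key := (hCA.2 C' hC'min).2
    intro v hv
    have hvx : v ≠ x := fun h => hxB (h ▸ hv.1)
    have hmem : v ∈ (B ∪ Set.singleton x) ∩ C' := key ⟨Or.inl hv.1, hv.2⟩
    exact ⟨hv.1, hmem.2⟩
  · push_neg at hcase
    -- insert x C' is a minimum cover of G[A, B∪{x}]
    have hmin : IsMinVertexCover (crossingGraph G A (B ∪ Set.singleton x)) (insert x C') := by
      refine ⟨hins, fun D hD => ?_⟩
      calc (insert x C').ncard ≤ C'.ncard + 1 := Set.ncard_insert_le x C'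
        _ ≤ CA.ncard := hcase
        _ ≤ D.ncard := hCA.1.2 D hD
    have key := (hCA.2 (insert x C') hmin).2
    intro v hv
    have hvx : v ≠ x := fun h => hxB (h ▸ hv.1)
    have : v ∈ (B ∪ Set.singleton x) ∩ insert x C' := key ⟨Or.inl hv.1, hv.2⟩
    rcases this.2 with h | h
    · exact absurd h hvx
    · exact ⟨hv.1, h⟩
end

section
/- Let G be a finite simple graph whose vertex set is partitioned into disjoint sets A, B, and {x}. Let C' be the A-König cover of the bipartite graph G[A, B] and let C be a minimum vertex cover of the bipartite graph G[A ∪ {x}, B]. Then B ∩ C' ⊆ B ∩ C. -/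
open SimpleGraph

/-- For a partition of the vertices of `G` into `A`, `B` and
`{x}`, the `A`-König cover `C'` of `G[A, B]` and any minimum vertex cover `C` of
`G[A ∪ {x}, B]` satisfy `B ∩ C' ⊆ B ∩ C`. -/
theorem single_inter_B_subset {V : Type} [Fintype V] (G : SimpleGraph V)
    (A B : Set V) (x : V)
    (hAB : Disjoint A B) (hxA : x ∉ A) (hxB : x ∉ B)
    (hU : A ∪ B ∪ {x} = Set.univ)
    (C' : Set V) (hC' : IsKoenigCover (crossingGraph G A B) A B C')
    (C : Set V) (hC : IsMinVertexCover (crossingGraph G (A ∪ {x}) B) C) :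
    B ∩ C' ⊆ B ∩ C := by
  intro b hb
  obtain ⟨hbB, hbC'⟩ := hb
  refine ⟨hbB, ?_⟩
  by_contra hbC
  obtain ⟨⟨hC'cov, hC'min⟩, hK⟩ := hC'
  obtain ⟨hCcov, hCmin⟩ := hC
  -- edges of G[A,B] are edges of G[A∪{x},B]
  have hle : ∀ ⦃u v : V⦄, (crossingGraph G A B).Adj u v →
      (crossingGraph G (A ∪ {x}) B).Adj u v := by
    rintro u v ⟨h1, h2⟩
    exact ⟨h1, h2.imp (fun h => ⟨Set.mem_union_left _ h.1, h.2⟩)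
      (fun h => ⟨h.1, Set.mem_union_left _ h.2⟩)⟩
  -- C' ⊆ A ∪ B
  have hC'sub : C' ⊆ A ∪ B := by
    intro v hv
    by_contra hvAB
    have hcov : _root_.IsVertexCover (crossingGraph G A B) (C' \ {v}) := by
      rintro u w ⟨h1, h2⟩
      have hu : u ≠ v := by
        rintro rfl
        exact hvAB (h2.elim (fun h => Or.inl h.1) (fun h => Or.inr h.1))
      have hw : w ≠ v := by
        rintro rfl
        exact hvAB (h2.elim (fun h => Or.inr h.2) (fun h => Or.inl h.2))
      rcases hC'cov ⟨h1, h2⟩ with h | h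
      · exact Or.inl ⟨h, hu⟩
      · exact Or.inr ⟨h, hw⟩
    have h1 := hC'min _ hcov
    have h2 := Set.ncard_diff_singleton_lt_of_mem hv (Set.toFinite _)
    omega
  by_cases hxC : x ∈ C
  · -- C' ∪ {x} covers the big graph, so |C| ≤ |C'| + 1, and C \ {x} is a
    -- minimum cover of G[A,B]
    have cover1 : _root_.IsVertexCover (crossingGraph G (A ∪ {x}) B) (C' ∪ {x}) := by
      rintro u v ⟨h1, h2⟩
      rcases h2 with ⟨hu, hv⟩ | ⟨hu, hv⟩
      · rcases hu with hu | hu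
        · exact (hC'cov ⟨h1, Or.inl ⟨hu, hv⟩⟩).imp (fun h => Or.inl h) (fun h => Or.inl h)
        · exact Or.inl (Or.inr hu)
      · rcases hv with hv | hv
        · exact (hC'cov ⟨h1, Or.inr ⟨hu, hv⟩⟩).imp (fun h => Or.inl h) (fun h => Or.inl h)
        · exact Or.inr (Or.inr hv)
    have hle1 : C.ncard ≤ C'.ncard + 1 := by
      have := hCmin _ cover1
      have h2 := Set.ncard_union_le C' {x}
      simp only [Set.ncard_singleton] at h2
      omega
    have hDcov : _root_.IsVertexCover (crossingGraph G A B) (C \ {x}) := by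
      rintro u v ⟨h1, h2⟩
      have hu : u ≠ x := by
        rintro rfl
        exact h2.elim (fun h => hxA h.1) (fun h => hxB h.1)
      have hv : v ≠ x := by
        rintro rfl
        exact h2.elim (fun h => hxB h.2) (fun h => hxA h.2)
      rcases hCcov (hle ⟨h1, h2⟩) with h | h
      · exact Or.inl ⟨h, hu⟩
      · exact Or.inr ⟨h, hv⟩
    have hDcard : (C \ {x}).ncard + 1 = C.ncard :=
      Set.ncard_diff_singleton_add_one hxC (Set.toFinite _)
    have hDmin : IsMinVertexCover (crossingGraph G A B) (C \ {x}) := by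
      refine ⟨hDcov, fun C'' h'' => ?_⟩
      have := hC'min C'' h''
      omega
    have := (hK _ hDmin).2 ⟨hbB, hbC'⟩
    exact hbC this.2.1
  · -- x ∉ C
    have hCsub : C ⊆ A ∪ B := by
      intro v hv
      have hvU : v ∈ A ∪ B ∪ {x} := hU ▸ Set.mem_univ v
      rcases hvU with h | h
      · exact h
      · exact absurd (h ▸ hv) hxC
    have hCcovAB : _root_.IsVertexCover (crossingGraph G A B) C := fun u v h => hCcov (hle h)
    set E : Set V := (A ∩ (C ∪ C')) ∪ (B ∩ (C ∩ C')) with hE_def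
    set F : Set V := (A ∩ (C ∩ C')) ∪ (B ∩ (C ∪ C')) with hF_def
    have hEcov : _root_.IsVertexCover (crossingGraph G A B) E := by
      rintro u v ⟨h1, h2⟩
      rcases h2 with ⟨hu, hv⟩ | ⟨hu, hv⟩
      · by_cases hc : u ∈ C ∪ C'
        · exact Or.inl (Or.inl ⟨hu, hc⟩)
        · rw [Set.mem_union] at hc
          push_neg at hc
          have h3 := (hCcovAB ⟨h1, Or.inl ⟨hu, hv⟩⟩).resolve_left hc.1
          have h4 := (hC'cov ⟨h1, Or.inl ⟨hu, hv⟩⟩).resolve_left hc.2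
          exact Or.inr (Or.inr ⟨hv, h3, h4⟩)
      · by_cases hc : v ∈ C ∪ C'
        · exact Or.inr (Or.inl ⟨hv, hc⟩)
        · rw [Set.mem_union] at hc
          push_neg at hc
          have h3 := (hCcovAB ⟨h1, Or.inr ⟨hu, hv⟩⟩).resolve_right hc.1
          have h4 := (hC'cov ⟨h1, Or.inr ⟨hu, hv⟩⟩).resolve_right hc.2
          exact Or.inl (Or.inr ⟨hu, h3, h4⟩)
    have hFcovH : _root_.IsVertexCover (crossingGraph G (A ∪ {x}) B) F := by
      rintro u v ⟨h1, h2⟩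
      rcases h2 with ⟨hu, hv⟩ | ⟨hu, hv⟩
      · rcases hu with hu | hu
        · by_cases hc : v ∈ C ∪ C'
          · exact Or.inr (Or.inr ⟨hv, hc⟩)
          · rw [Set.mem_union] at hc
            push_neg at hc
            have h3 := (hCcovAB ⟨h1, Or.inl ⟨hu, hv⟩⟩).resolve_right hc.1
            have h4 := (hC'cov ⟨h1, Or.inl ⟨hu, hv⟩⟩).resolve_right hc.2
            exact Or.inl (Or.inl ⟨hu, h3, h4⟩)
        · -- u = x
          have hvC : v ∈ C := by
            rw [Set.mem_singleton_iff] at hu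
            subst hu
            rcases hCcov ⟨h1, Or.inl ⟨Set.mem_union_right _ rfl, hv⟩⟩ with h | h
            · exact absurd h hxC
            · exact h
          exact Or.inr (Or.inr ⟨hv, Or.inl hvC⟩)
      · rcases hv with hv | hv
        · by_cases hc : u ∈ C ∪ C'
          · exact Or.inl (Or.inr ⟨hu, hc⟩)
          · rw [Set.mem_union] at hc
            push_neg at hc
            have h3 := (hCcovAB ⟨h1, Or.inr ⟨hu, hv⟩⟩).resolve_left hc.1
            have h4 := (hC'cov ⟨h1, Or.inr ⟨hu, hv⟩⟩).resolve_left hc.2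
            exact Or.inr (Or.inl ⟨hv, h3, h4⟩)
        · -- v = x
          have huC : u ∈ C := by
            rcases hCcov ⟨h1, Or.inr ⟨hu, Set.mem_union_right _ hv⟩⟩ with h | h
            · exact h
            · rw [Set.mem_singleton_iff] at hv; subst hv; exact absurd h hxC
          exact Or.inl (Or.inr ⟨hu, Or.inl huC⟩)
    -- the size computation
    have hsplit : ∀ s : Set V, s ⊆ A ∪ B → s.ncard = (A ∩ s).ncard + (B ∩ s).ncard := by
      intro s hs
      rw [← Set.ncard_union_eq (hAB.mono Set.inter_subset_left Set.inter_subset_left)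
        (Set.toFinite _) (Set.toFinite _), ← Set.union_inter_distrib_right,
        Set.inter_eq_right.mpr hs]
    have hdisjE : Disjoint (A ∩ (C ∪ C')) (B ∩ (C ∩ C')) :=
      hAB.mono Set.inter_subset_left Set.inter_subset_left
    have hdisjF : Disjoint (A ∩ (C ∩ C')) (B ∩ (C ∪ C')) :=
      hAB.mono Set.inter_subset_left Set.inter_subset_left
    have hEcard : E.ncard = (A ∩ (C ∪ C')).ncard + (B ∩ (C ∩ C')).ncard :=
      Set.ncard_union_eq hdisjE (Set.toFinite _) (Set.toFinite _)
    have hFcard : F.ncard = (A ∩ (C ∩ C')).ncard + (B ∩ (C ∪ C')).ncard :=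
      Set.ncard_union_eq hdisjF (Set.toFinite _) (Set.toFinite _)
    have hA : (A ∩ (C ∪ C')).ncard + (A ∩ (C ∩ C')).ncard
        = (A ∩ C).ncard + (A ∩ C').ncard := by
      rw [Set.inter_union_distrib_left, Set.inter_inter_distrib_left]
      exact Set.ncard_union_add_ncard_inter _ _ (Set.toFinite _) (Set.toFinite _)
    have hB : (B ∩ (C ∪ C')).ncard + (B ∩ (C ∩ C')).ncard
        = (B ∩ C).ncard + (B ∩ C').ncard := by
      rw [Set.inter_union_distrib_left, Set.inter_inter_distrib_left]
      exact Set.ncard_union_add_ncard_inter _ _ (Set.toFinite _) (Set.toFinite _)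
    have key : E.ncard + F.ncard = C.ncard + C'.ncard := by
      rw [hEcard, hFcard, hsplit C hCsub, hsplit C' hC'sub]
      omega
    by_cases hE : E.ncard ≤ C'.ncard
    · have hEmin : IsMinVertexCover (crossingGraph G A B) E :=
        ⟨hEcov, fun C'' h'' => hE.trans (hC'min C'' h'')⟩
      have hbE := (hK E hEmin).2 ⟨hbB, hbC'⟩
      rcases hbE.2 with h | h
      · exact (Set.disjoint_left.mp hAB h.1) hbB
      · exact hbC h.2.1
    · have hF := hCmin F hFcovH
      omega
end

section
/- Let G be a finite simple graph and let S ⊆ S' ⊆ V(G). Let C_S be the S-König cover of the bipartite graph G[S, V(G)∖S] and let C_{S'} be the S'-König cover of the bipartite graph G[S', V(G)∖S']. Then S ∩ C_{S'} ⊆ C_S and C_S ∖ S' ⊆ C_{S'}. -/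
open SimpleGraph

/-- For `S ⊆ S' ⊆ V(G)`, the `S`-König cover `C_S` of
`G[S, V(G)∖S]` and the `S'`-König cover `C_{S'}` of `G[S', V(G)∖S']` satisfy
`S ∩ C_{S'} ⊆ C_S` and `C_S ∖ S' ⊆ C_{S'}`. -/
theorem nested_koenig_monotone {V : Type} [Fintype V] (G : SimpleGraph V)
    (S S' : Set V) (hSS' : S ⊆ S')
    (CS : Set V) (hCS : IsKoenigCover (crossingGraph G S Sᶜ) S Sᶜ CS)
    (CS' : Set V) (hCS' : IsKoenigCover (crossingGraph G S' S'ᶜ) S' S'ᶜ CS') :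
    S ∩ CS' ⊆ CS ∧ CS \ S' ⊆ CS' := by
  obtain ⟨⟨hC1cov, hC1min⟩, hC1ext⟩ := hCS
  obtain ⟨⟨hC2cov, hC2min⟩, _⟩ := hCS'
  set D1 : Set V :=
    {v | (v ∈ S ∧ (v ∈ CS ∨ v ∈ CS')) ∨ (v ∉ S ∧ v ∈ CS ∧ (v ∈ CS' ∨ v ∈ S'))} with hD1def
  set D2 : Set V :=
    {v | (v ∈ S' ∧ v ∈ CS' ∧ (v ∈ CS ∨ v ∉ S)) ∨ (v ∉ S' ∧ (v ∈ CS ∨ v ∈ CS'))} with hD2def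
  have main1 : ∀ u v : V, G.Adj u v → u ∈ S → v ∉ S → u ∈ D1 ∨ v ∈ D1 := by
    intro u v hG hu hv
    rcases hC1cov ⟨hG, Or.inl ⟨hu, hv⟩⟩ with h1 | h1
    · exact Or.inl (Or.inl ⟨hu, Or.inl h1⟩)
    · by_cases hv' : v ∈ S'
      · exact Or.inr (Or.inr ⟨hv, h1, Or.inr hv'⟩)
      · rcases hC2cov ⟨hG, Or.inl ⟨hSS' hu, hv'⟩⟩ with h2 | h2
        · exact Or.inl (Or.inl ⟨hu, Or.inr h2⟩)
        · exact Or.inr (Or.inr ⟨hv, h1, Or.inl h2⟩)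
  have main2 : ∀ u v : V, G.Adj u v → u ∈ S' → v ∉ S' → u ∈ D2 ∨ v ∈ D2 := by
    intro u v hG hu hv
    rcases hC2cov ⟨hG, Or.inl ⟨hu, hv⟩⟩ with h1 | h1
    · by_cases hu' : u ∈ S
      · have hvS : v ∉ S := fun h => hv (hSS' h)
        rcases hC1cov ⟨hG, Or.inl ⟨hu', hvS⟩⟩ with h2 | h2
        · exact Or.inl (Or.inl ⟨hu, h1, Or.inl h2⟩)
        · exact Or.inr (Or.inr ⟨hv, Or.inl h2⟩)
      · exact Or.inl (Or.inl ⟨hu, h1, Or.inr hu'⟩)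
    · exact Or.inr (Or.inr ⟨hv, Or.inr h1⟩)
  have hD1cov : _root_.IsVertexCover (crossingGraph G S Sᶜ) D1 := by
    rintro u v ⟨hG, h | h⟩
    · exact main1 u v hG h.1 h.2
    · exact (main1 v u hG.symm h.2 h.1).symm
  have hD2cov : _root_.IsVertexCover (crossingGraph G S' S'ᶜ) D2 := by
    rintro u v ⟨hG, h | h⟩
    · exact main2 u v hG h.1 h.2
    · exact (main2 v u hG.symm h.2 h.1).symm
  have hunion : D1 ∪ D2 ⊆ CS ∪ CS' := by
    intro v hv
    simp only [hD1def, hD2def, Set.mem_union, Set.mem_setOf_eq] at hv ⊢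
    tauto
  have hinter : D1 ∩ D2 ⊆ CS ∩ CS' := by
    intro v hv
    have hss := @hSS' v
    simp only [hD1def, hD2def, Set.mem_inter_iff, Set.mem_setOf_eq] at hv ⊢
    tauto
  have hcard : D1.ncard + D2.ncard ≤ CS.ncard + CS'.ncard := by
    have e1 := Set.ncard_union_add_ncard_inter D1 D2 (Set.toFinite _) (Set.toFinite _)
    have e2 := Set.ncard_union_add_ncard_inter CS CS' (Set.toFinite _) (Set.toFinite _)
    have l1 : (D1 ∪ D2).ncard ≤ (CS ∪ CS').ncard :=
      Set.ncard_le_ncard hunion (Set.toFinite _)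
    have l2 : (D1 ∩ D2).ncard ≤ (CS ∩ CS').ncard :=
      Set.ncard_le_ncard hinter (Set.toFinite _)
    omega
  have h1 : CS.ncard ≤ D1.ncard := hC1min D1 hD1cov
  have h2 : CS'.ncard ≤ D2.ncard := hC2min D2 hD2cov
  have heq : D1.ncard = CS.ncard := by omega
  have hD1min : IsMinVertexCover (crossingGraph G S Sᶜ) D1 :=
    ⟨hD1cov, fun C' hC' => heq ▸ hC1min C' hC'⟩
  obtain ⟨hmax, hmin⟩ := hC1ext D1 hD1min
  constructor
  · intro v hv
    exact (hmax ⟨hv.1, Or.inl ⟨hv.1, Or.inr hv.2⟩⟩).2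
  · intro v hv
    obtain ⟨hvC, hvS'⟩ := hv
    have hvS : v ∉ S := fun h => hvS' (hSS' h)
    have : v ∈ Sᶜ ∩ D1 := hmin ⟨hvS, hvC⟩
    rcases this.2 with h | h
    · exact absurd h.1 hvS
    · rcases h.2.2 with h' | h'
      · exact h'
      · exact absurd h' hvS'
end

section
/- Let G be a finite connected simple graph and (T,δ) a rooted branch decomposition over V(G). For each node u of T let C_u denote the δ(u)-König cover of the bipartite graph G[δ(u), V(G)∖δ(u)]. Then for any node v of T, letting 𝒞 be the set of descendants of v in T (including v), one has (⋃_{x ∈ V(T)∖𝒞} C_x) ∩ (⋃_{x ∈ 𝒞} C_x) ⊆ C_v. -/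
open SimpleGraph

/-- A rooted branch decomposition over `V`: obtained from a branch decomposition
(a tree of maximum degree 3 with a bijection from its leaves to `V`) by
subdividing an edge and taking the new vertex as the root; hence a tree of
maximum degree 3 whose root has degree exactly 2, with a bijection from the
leaves (degree-1 vertices) to `V`. -/
structure RootedBranchDecomp (V N : Type) where
  tree : SimpleGraph N
  isTree : tree.IsTree
  root : N
  deg_le : ∀ x : N, (tree.neighborSet x).ncard ≤ 3
  root_deg : (tree.neighborSet root).ncard = 2
  leafEquiv : {x : N // (tree.neighborSet x).ncard = 1} ≃ V

/-- `u` is a descendant of `v` (equivalently `v` is an ancestor of `u`): `v` lies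
on the (unique) path from the root to `u`. -/
def RootedBranchDecomp.Desc {V N : Type} (D : RootedBranchDecomp V N)
    (v u : N) : Prop :=
  ∃ p : D.tree.Walk D.root u, p.IsPath ∧ v ∈ p.support

/-- `δ(u)`: the set of elements of `V` mapped from the leaves of the tree that
are descendants of `u`. -/
def RootedBranchDecomp.vertsBelow {V N : Type} (D : RootedBranchDecomp V N)
    (u : N) : Set V :=
  {g : V | D.Desc u (D.leafEquiv.symm g : N)}


/-! Auxiliary lemmas -/

lemma crossingGraph_compl {V : Type} (G : SimpleGraph V) (S : Set V) :
    crossingGraph G Sᶜ (Sᶜ)ᶜ = crossingGraph G S Sᶜ := by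
  ext u v
  simp only [crossingGraph, compl_compl]
  tauto

lemma uncross_cover {V : Type} (G : SimpleGraph V) {A B : Set V} (hAB : Disjoint A B)
    {P Q : Set V} (hP : _root_.IsVertexCover (crossingGraph G A Aᶜ) P)
    (hQ : _root_.IsVertexCover (crossingGraph G B Bᶜ) Q) :
    _root_.IsVertexCover (crossingGraph G A Aᶜ) ((P ∪ Q) ∩ A ∪ (P ∩ Q) ∩ B ∪ P \ (A ∪ B)) := by
  have key : ∀ u v : V, G.Adj u v → u ∈ A → v ∉ A →
      u ∈ (P ∪ Q) ∩ A ∪ (P ∩ Q) ∩ B ∪ P \ (A ∪ B) ∨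
      v ∈ (P ∪ Q) ∩ A ∪ (P ∩ Q) ∩ B ∪ P \ (A ∪ B) := by
    intro u v hadj huA hvA
    have h1 := hP ⟨hadj, Or.inl ⟨huA, hvA⟩⟩
    have huB : u ∉ B := Set.disjoint_left.mp hAB huA
    by_cases hvB : v ∈ B
    · have h2 := hQ ⟨hadj, Or.inr ⟨huB, hvB⟩⟩
      simp only [Set.mem_union, Set.mem_inter_iff, Set.mem_diff]
      tauto
    · simp only [Set.mem_union, Set.mem_inter_iff, Set.mem_diff]
      tauto
  rintro u v ⟨hadj, hside⟩
  rcases hside with ⟨hu, hv⟩ | ⟨hu, hv⟩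
  · exact key u v hadj hu hv
  · exact (key v u hadj.symm hv hu).symm

lemma uncross_card {V : Type} [Fintype V] {A B : Set V} (hAB : Disjoint A B) (P Q : Set V) :
    ((P ∪ Q) ∩ A ∪ (P ∩ Q) ∩ B ∪ P \ (A ∪ B)).ncard +
      ((Q ∪ P) ∩ B ∪ (Q ∩ P) ∩ A ∪ Q \ (B ∪ A)).ncard ≤ P.ncard + Q.ncard := by
  have e1 : ((P ∪ Q) ∩ A).ncard + ((Q ∩ P) ∩ A).ncard = (P ∩ A).ncard + (Q ∩ A).ncard := by
    rw [Set.union_inter_distrib_right, show (Q ∩ P) ∩ A = (P ∩ A) ∩ (Q ∩ A) by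
      ext z; simp [Set.mem_inter_iff]; tauto]
    exact Set.ncard_union_add_ncard_inter _ _ (Set.toFinite _) (Set.toFinite _)
  have e2 : ((Q ∪ P) ∩ B).ncard + ((P ∩ Q) ∩ B).ncard = (Q ∩ B).ncard + (P ∩ B).ncard := by
    rw [Set.union_inter_distrib_right, show (P ∩ Q) ∩ B = (Q ∩ B) ∩ (P ∩ B) by
      ext z; simp [Set.mem_inter_iff]; tauto]
    exact Set.ncard_union_add_ncard_inter _ _ (Set.toFinite _) (Set.toFinite _)
  have e3 : (P ∩ A).ncard + (P ∩ B).ncard + (P \ (A ∪ B)).ncard = P.ncard := by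
    have h1 : (P ∩ A) ∪ (P ∩ B) = P ∩ (A ∪ B) := (Set.inter_union_distrib_left _ _ _).symm
    have h2 : Disjoint (P ∩ A) (P ∩ B) :=
      (hAB.mono (Set.inter_subset_right) (Set.inter_subset_right))
    rw [← Set.ncard_union_eq h2 (Set.toFinite _) (Set.toFinite _), h1]
    exact Set.ncard_inter_add_ncard_diff_eq_ncard P (A ∪ B) (Set.toFinite _)
  have e4 : (Q ∩ B).ncard + (Q ∩ A).ncard + (Q \ (B ∪ A)).ncard = Q.ncard := by
    have h1 : (Q ∩ B) ∪ (Q ∩ A) = Q ∩ (B ∪ A) := (Set.inter_union_distrib_left _ _ _).symm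
    have h2 : Disjoint (Q ∩ B) (Q ∩ A) :=
      (hAB.symm.mono (Set.inter_subset_right) (Set.inter_subset_right))
    rw [← Set.ncard_union_eq h2 (Set.toFinite _) (Set.toFinite _), h1]
    exact Set.ncard_inter_add_ncard_diff_eq_ncard Q (B ∪ A) (Set.toFinite _)
  have u1 : ((P ∪ Q) ∩ A ∪ (P ∩ Q) ∩ B ∪ P \ (A ∪ B)).ncard ≤
      ((P ∪ Q) ∩ A).ncard + ((P ∩ Q) ∩ B).ncard + (P \ (A ∪ B)).ncard :=
    le_trans (Set.ncard_union_le _ _) (by gcongr; exact Set.ncard_union_le _ _)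
  have u2 : ((Q ∪ P) ∩ B ∪ (Q ∩ P) ∩ A ∪ Q \ (B ∪ A)).ncard ≤
      ((Q ∪ P) ∩ B).ncard + ((Q ∩ P) ∩ A).ncard + (Q \ (B ∪ A)).ncard :=
    le_trans (Set.ncard_union_le _ _) (by gcongr; exact Set.ncard_union_le _ _)
  omega

lemma min_uncross {V : Type} [Fintype V] (G : SimpleGraph V) {A B : Set V}
    (hAB : Disjoint A B) {P Q : Set V}
    (hP : IsMinVertexCover (crossingGraph G A Aᶜ) P)
    (hQ : IsMinVertexCover (crossingGraph G B Bᶜ) Q) :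
    IsMinVertexCover (crossingGraph G A Aᶜ) ((P ∪ Q) ∩ A ∪ (P ∩ Q) ∩ B ∪ P \ (A ∪ B)) ∧
    IsMinVertexCover (crossingGraph G B Bᶜ) ((Q ∪ P) ∩ B ∪ (Q ∩ P) ∩ A ∪ Q \ (B ∪ A)) := by
  have cA := uncross_cover G hAB hP.1 hQ.1
  have cB := uncross_cover G hAB.symm hQ.1 hP.1
  have card := uncross_card hAB P Q
  have h1 := hP.2 _ cA
  have h2 := hQ.2 _ cB
  exact ⟨⟨cA, fun C' hC' => by have := hP.2 C' hC'; omega⟩,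
    ⟨cB, fun C' hC' => by have := hQ.2 C' hC'; omega⟩⟩

lemma mem_takeUntil_or {N : Type} {G : SimpleGraph N} [DecidableEq N] {x v : N} :
    ∀ {a b : N} (p : G.Walk a b) (hx : x ∈ p.support) (hv : v ∈ p.support),
      v ∈ (p.takeUntil x hx).support ∨ x ∈ (p.takeUntil v hv).support := by
  intro a b p
  induction p with
  | nil =>
    intro hx hv
    rename_i u
    left
    have : v = u := Walk.mem_support_nil_iff.mp hv
    subst this
    exact Walk.start_mem_support _
  | cons r q ih =>
    intro hx hv
    rename_i a c b
    by_cases hva : v = a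
    · subst hva; left; exact Walk.start_mem_support _
    by_cases hxa : x = a
    · subst hxa; right; exact Walk.start_mem_support _
    have hx' : x ∈ q.support := by
      have := hx
      rw [Walk.support_cons, List.mem_cons] at this
      tauto
    have hv' : v ∈ q.support := by
      have := hv
      rw [Walk.support_cons, List.mem_cons] at this
      tauto
    have etx : (Walk.cons r q).takeUntil x hx = Walk.cons r (q.takeUntil x hx') := by
      simp only [Walk.takeUntil]
      rw [dif_neg (fun h => hxa h.symm)]
    have etv : (Walk.cons r q).takeUntil v hv = Walk.cons r (q.takeUntil v hv') := by
      simp only [Walk.takeUntil]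
      rw [dif_neg (fun h => hva h.symm)]
    rcases ih hx' hv' with h | h
    · left; rw [etx, Walk.support_cons]; exact List.mem_cons_of_mem _ h
    · right; rw [etv, Walk.support_cons]; exact List.mem_cons_of_mem _ h

lemma desc_trans {V N : Type} (D : RootedBranchDecomp V N) {v y u : N}
    (hvy : D.Desc v y) (hyu : D.Desc y u) : D.Desc v u := by
  classical
  obtain ⟨q, hq, hvq⟩ := hvy
  obtain ⟨p, hp, hyp⟩ := hyu
  have hpq : q = p.takeUntil y hyp :=
    (D.isTree.existsUnique_path D.root y).unique hq (hp.takeUntil hyp)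
  exact ⟨p, hp, (p.support_takeUntil_subset hyp) (hpq ▸ hvq)⟩

lemma desc_total {V N : Type} (D : RootedBranchDecomp V N) {x v l : N}
    (hxl : D.Desc x l) (hvl : D.Desc v l) (h : ¬ D.Desc v x) : D.Desc x v := by
  classical
  obtain ⟨p, hp, hxp⟩ := hxl
  obtain ⟨p', hp', hvp'⟩ := hvl
  have hpp : p' = p := (D.isTree.existsUnique_path D.root l).unique hp' hp
  subst hpp
  rcases mem_takeUntil_or p' hxp hvp' with hcase | hcase
  · exact absurd ⟨p'.takeUntil x hxp, hp.takeUntil hxp, hcase⟩ h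
  · exact ⟨p'.takeUntil v hvp', hp.takeUntil hvp', hcase⟩

lemma vertsBelow_subset_of_desc {V N : Type} (D : RootedBranchDecomp V N) {v y : N}
    (h : D.Desc v y) : D.vertsBelow y ⊆ D.vertsBelow v :=
  fun _ hg => desc_trans D h hg

lemma vertsBelow_cases {V N : Type} (D : RootedBranchDecomp V N) {v x : N}
    (h : ¬ D.Desc v x) :
    D.vertsBelow v ⊆ D.vertsBelow x ∨ Disjoint (D.vertsBelow x) (D.vertsBelow v) := by
  by_cases hex : ∃ g, g ∈ D.vertsBelow x ∧ g ∈ D.vertsBelow v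
  · obtain ⟨g, hgx, hgv⟩ := hex
    exact Or.inl (vertsBelow_subset_of_desc D (desc_total D hgx hgv h))
  · right
    rw [Set.disjoint_left]
    intro g hgx hgv
    exact hex ⟨g, hgx, hgv⟩

/-- For a connected graph `G` and rooted branch decomposition
`(T,δ)` over `V(G)`, where `C_u` is the `δ(u)`-König cover of
`G[δ(u), V(G)∖δ(u)]` for each node `u`, for any node `v` with `𝒞` its set of
descendants (including `v` itself) we have
`(⋃_{x ∉ 𝒞} C_x) ∩ (⋃_{x ∈ 𝒞} C_x) ⊆ C_v`. -/
theorem koenig_descendant_union {V N : Type} [Fintype V] [Fintype N]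
    (G : SimpleGraph V) (hG : G.Connected)
    (D : RootedBranchDecomp V N) (C : N → Set V)
    (hC : ∀ u : N, IsKoenigCover
      (crossingGraph G (D.vertsBelow u) (D.vertsBelow u)ᶜ)
      (D.vertsBelow u) (D.vertsBelow u)ᶜ (C u))
    (v : N) :
    (⋃ x ∈ {x : N | ¬ D.Desc v x}, C x) ∩ (⋃ x ∈ {x : N | D.Desc v x}, C x)
      ⊆ C v := by
  classical
  intro w hw
  obtain ⟨hw1, hw2⟩ := hw
  simp only [Set.mem_iUnion, Set.mem_setOf_eq, exists_prop] at hw1 hw2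
  obtain ⟨x, hx, hwx⟩ := hw1
  obtain ⟨y, hy, hwy⟩ := hw2
  set S := D.vertsBelow v with hSdef
  by_cases hwS : w ∈ S
  · rcases vertsBelow_cases D hx with hsub | hdisj
    · -- S ⊆ X := vertsBelow x
      have hdisj' : Disjoint S (D.vertsBelow x)ᶜ :=
        Set.disjoint_left.mpr (fun a haS haXc => haXc (hsub haS))
      have hKx : IsMinVertexCover (crossingGraph G (D.vertsBelow x)ᶜ ((D.vertsBelow x)ᶜ)ᶜ)
          (C x) := by
        rw [crossingGraph_compl]; exact (hC x).1
      have hm := min_uncross G hdisj' (hC v).1 hKx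
      have hext := ((hC v).2 _ hm.1).1
      exact (hext ⟨hwS, Or.inl (Or.inl ⟨Or.inr hwx, hwS⟩)⟩).2
    · -- Disjoint (vertsBelow x) S
      have hm := min_uncross G hdisj (hC x).1 (hC v).1
      have hext := ((hC v).2 _ hm.2).1
      exact (hext ⟨hwS, Or.inl (Or.inl ⟨Or.inr hwx, hwS⟩)⟩).2
  · -- w ∉ S : use y
    have hAS : D.vertsBelow y ⊆ S := vertsBelow_subset_of_desc D hy
    have hdisj : Disjoint (D.vertsBelow y) Sᶜ :=
      Set.disjoint_left.mpr (fun a ha hac => hac (hAS ha))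
    have hKv : IsMinVertexCover (crossingGraph G Sᶜ (Sᶜ)ᶜ) (C v) := by
      rw [crossingGraph_compl]; exact (hC v).1
    have hm := min_uncross G hdisj (hC y).1 hKv
    have hext := ((hC y).2 _ hm.1).2
    have hwA : w ∉ D.vertsBelow y := fun hwA => hwS (hAS hwA)
    have hmem := hext ⟨hwA, hwy⟩
    rcases hmem.2 with (⟨_, hA⟩ | ⟨hPQ, _⟩) | ⟨_, hno⟩
    · exact absurd hA hwA
    · exact hPQ.2
    · exact absurd (Or.inr hwS) hno
end

section
/- Let G be a finite connected simple graph and (T,δ) a rooted branch decomposition over V(G). For each non-root node u of T let C_u denote the δ(u)-König cover of the bipartite graph G[δ(u), V(G)∖δ(u)]. Then for every vertex x of G, the set of edges {uv ∈ E(T) : u is the child endpoint of the edge uv and x ∈ C_u} induces a connected subforest of T. -/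
open SimpleGraph

/-- `u` is the child endpoint of the tree edge `uv`: they are adjacent and `v`
lies on the path from the root to `u`. -/
def RootedBranchDecomp.IsChild {V N : Type} (D : RootedBranchDecomp V N)
    (u v : N) : Prop :=
  D.tree.Adj u v ∧ D.Desc v u

/-- The subgraph of the decomposition tree induced by the set of edges `uv` such
that `u` is the child endpoint and `x ∈ C_u`. -/
def coverSubforest {V N : Type} (D : RootedBranchDecomp V N) (C : N → Set V)
    (x : V) : SimpleGraph N :=
  SimpleGraph.fromRel (fun u v => D.IsChild u v ∧ x ∈ C u)

/-! ### Auxiliary lemmas -/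

section CoverLemmas

variable {V : Type} [Fintype V]

lemma exists_minVC (H : SimpleGraph V) : ∃ C : Set V, IsMinVertexCover H C := by
  classical
  have hne : {n : ℕ | ∃ C : Set V, _root_.IsVertexCover H C ∧ C.ncard = n}.Nonempty :=
    ⟨(Set.univ : Set V).ncard, Set.univ, fun u v _ => Or.inl (Set.mem_univ u), rfl⟩
  obtain ⟨C, hC, hcard⟩ := Nat.sInf_mem hne
  refine ⟨C, hC, fun C' hC' => ?_⟩
  rw [hcard]
  exact Nat.sInf_le ⟨C', hC', rfl⟩

variable {G : SimpleGraph V}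

lemma crossing_compl (S : Set V) : crossingGraph G Sᶜ Sᶜᶜ = crossingGraph G S Sᶜ := by
  ext u v
  show G.Adj u v ∧ _ ↔ G.Adj u v ∧ _
  rw [compl_compl]
  tauto

lemma isCover_crossing_iff {A K : Set V} :
    _root_.IsVertexCover (crossingGraph G A Aᶜ) K ↔
      ∀ ⦃a b : V⦄, G.Adj a b → a ∈ A → b ∉ A → a ∈ K ∨ b ∈ K := by
  constructor
  · intro h a b hab ha hb
    exact h (show (crossingGraph G A Aᶜ).Adj a b from ⟨hab, Or.inl ⟨ha, hb⟩⟩)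
  · rintro h u v ⟨hadj, hcase⟩
    rcases hcase with ⟨hu, hv⟩ | ⟨hu, hv⟩
    · exact h hadj hu hv
    · exact (h hadj.symm hv hu).symm

/-- The key exchange lemma for minimum vertex covers of nested cuts. -/
lemma exchange {A A' : Set V} (hAA : A ⊆ A') {K K' : Set V}
    (hK : IsMinVertexCover (crossingGraph G A Aᶜ) K)
    (hK' : IsMinVertexCover (crossingGraph G A' A'ᶜ) K') :
    IsMinVertexCover (crossingGraph G A Aᶜ)
      ((A ∩ (K ∪ K')) ∪ ((A' \ A) ∩ K) ∪ (A'ᶜ ∩ (K ∩ K'))) ∧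
    IsMinVertexCover (crossingGraph G A' A'ᶜ)
      ((A ∩ (K ∩ K')) ∪ ((A' \ A) ∩ K') ∪ (A'ᶜ ∩ (K ∪ K'))) := by
  classical
  set L : Set V := (A ∩ (K ∪ K')) ∪ ((A' \ A) ∩ K) ∪ (A'ᶜ ∩ (K ∩ K')) with hLdef
  set L' : Set V := (A ∩ (K ∩ K')) ∪ ((A' \ A) ∩ K') ∪ (A'ᶜ ∩ (K ∪ K')) with hL'def
  have hLcov : _root_.IsVertexCover (crossingGraph G A Aᶜ) L := by
    rw [isCover_crossing_iff]
    intro a b hab ha hb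
    have h1 : a ∈ K ∨ b ∈ K := (isCover_crossing_iff.1 hK.1) hab ha hb
    by_cases hbA' : b ∈ A'
    · rcases h1 with h1 | h1
      · exact Or.inl (Or.inl (Or.inl ⟨ha, Or.inl h1⟩))
      · exact Or.inr (Or.inl (Or.inr ⟨⟨hbA', hb⟩, h1⟩))
    · have h2 : a ∈ K' ∨ b ∈ K' := (isCover_crossing_iff.1 hK'.1) hab (hAA ha) hbA'
      rcases h1 with h1 | h1
      · exact Or.inl (Or.inl (Or.inl ⟨ha, Or.inl h1⟩))
      · rcases h2 with h2 | h2
        · exact Or.inl (Or.inl (Or.inl ⟨ha, Or.inr h2⟩))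
        · exact Or.inr (Or.inr ⟨hbA', h1, h2⟩)
  have hL'cov : _root_.IsVertexCover (crossingGraph G A' A'ᶜ) L' := by
    rw [isCover_crossing_iff]
    intro a b hab ha hb
    have h2 : a ∈ K' ∨ b ∈ K' := (isCover_crossing_iff.1 hK'.1) hab ha hb
    by_cases haA : a ∈ A
    · have h1 : a ∈ K ∨ b ∈ K := (isCover_crossing_iff.1 hK.1) hab haA (fun hbA => hb (hAA hbA))
      rcases h1 with h1 | h1
      · rcases h2 with h2 | h2
        · exact Or.inl (Or.inl (Or.inl ⟨haA, h1, h2⟩))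
        · exact Or.inr (Or.inr ⟨hb, Or.inr h2⟩)
      · exact Or.inr (Or.inr ⟨hb, Or.inl h1⟩)
    · rcases h2 with h2 | h2
      · exact Or.inl (Or.inl (Or.inr ⟨⟨ha, haA⟩, h2⟩))
      · exact Or.inr (Or.inr ⟨hb, Or.inr h2⟩)
  have hUn : L ∪ L' ⊆ K ∪ K' := by
    intro v hv
    simp only [hLdef, hL'def, Set.mem_union, Set.mem_inter_iff, Set.mem_diff,
      Set.mem_compl_iff] at hv ⊢
    tauto
  have hIn : L ∩ L' ⊆ K ∩ K' := by
    intro v hv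
    have hA : v ∈ A → v ∈ A' := fun h => hAA h
    simp only [hLdef, hL'def, Set.mem_union, Set.mem_inter_iff, Set.mem_diff,
      Set.mem_compl_iff] at hv ⊢
    tauto
  have hsum : L.ncard + L'.ncard ≤ K.ncard + K'.ncard := by
    have h1 := Set.ncard_union_add_ncard_inter L L' (Set.toFinite L) (Set.toFinite L')
    have h2 := Set.ncard_union_add_ncard_inter K K' (Set.toFinite K) (Set.toFinite K')
    have h3 : (L ∪ L').ncard ≤ (K ∪ K').ncard :=
      Set.ncard_le_ncard hUn (Set.toFinite _)
    have h4 : (L ∩ L').ncard ≤ (K ∩ K').ncard :=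
      Set.ncard_le_ncard hIn (Set.toFinite _)
    omega
  have hKL : K.ncard ≤ L.ncard := hK.2 L hLcov
  have hK'L' : K'.ncard ≤ L'.ncard := hK'.2 L' hL'cov
  have hLK : L.ncard = K.ncard := by omega
  have hL'K' : L'.ncard = K'.ncard := by omega
  constructor
  · exact ⟨hLcov, fun C' hC' => hLK ▸ hK.2 C' hC'⟩
  · exact ⟨hL'cov, fun C' hC' => hL'K' ▸ hK'.2 C' hC'⟩

/-- Transfer T1: existential membership on the `A` side transfers downward. -/
lemma transfer_A_ex {A A' : Set V} (hAA : A ⊆ A') {x : V} (hx : x ∈ A)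
    (hex : ∃ K, IsMinVertexCover (crossingGraph G A' A'ᶜ) K ∧ x ∈ K) :
    ∃ K, IsMinVertexCover (crossingGraph G A Aᶜ) K ∧ x ∈ K := by
  obtain ⟨K', hK', hxK'⟩ := hex
  obtain ⟨K, hK⟩ := exists_minVC (crossingGraph G A Aᶜ)
  refine ⟨_, (exchange hAA hK hK').1, ?_⟩
  exact Or.inl (Or.inl ⟨hx, Or.inr hxK'⟩)

/-- Transfer T2: universal membership on the `A` side transfers downward. -/
lemma transfer_A_all {A A' : Set V} (hAA : A ⊆ A') {x : V} (hx : x ∈ A)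
    (hall : ∀ K, IsMinVertexCover (crossingGraph G A' A'ᶜ) K → x ∈ K) :
    ∀ K, IsMinVertexCover (crossingGraph G A Aᶜ) K → x ∈ K := by
  intro K hK
  by_contra hxK
  obtain ⟨K', hK'⟩ := exists_minVC (crossingGraph G A' A'ᶜ)
  have hmem := hall _ (exchange hAA hK hK').2
  rcases hmem with (⟨-, hxK2, -⟩ | ⟨⟨-, hxA⟩, -⟩) | ⟨hxA', -⟩
  · exact hxK hxK2
  · exact hxA hx
  · exact hxA' (hAA hx)

/-- Transfer T4: universal membership on the `B'` side transfers upward. -/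
lemma transfer_B_all {A A' : Set V} (hAA : A ⊆ A') {x : V} (hx : x ∉ A')
    (hall : ∀ K, IsMinVertexCover (crossingGraph G A Aᶜ) K → x ∈ K) :
    ∀ K', IsMinVertexCover (crossingGraph G A' A'ᶜ) K' → x ∈ K' := by
  intro K' hK'
  obtain ⟨K, hK⟩ := exists_minVC (crossingGraph G A Aᶜ)
  have hmem := hall _ (exchange hAA hK hK').1
  rcases hmem with (⟨hxA, -⟩ | ⟨⟨hxA', -⟩, -⟩) | ⟨-, -, hxK'⟩
  · exact absurd (hAA hxA) hx
  · exact absurd hxA' hx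
  · exact hxK'

end CoverLemmas
section TreeLemmas

open SimpleGraph Walk

variable {V N : Type} [DecidableEq N] (D : RootedBranchDecomp V N)

/-- A prefix of a path (continued by a `takeUntil`) is a path. -/
lemma isPath_append_takeUntil {G : SimpleGraph N} {a b c : N} {p : G.Walk a b} {q : G.Walk b c}
    (h : (p.append q).IsPath) {y : N} (hy : y ∈ q.support) :
    (p.append (q.takeUntil y hy)).IsPath := by
  rw [Walk.isPath_def, Walk.support_append] at h ⊢
  have hq : q.support = (q.takeUntil y hy).support ++ ((q.dropUntil y hy).support).tail := by
    rw [← Walk.support_append, Walk.take_spec]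
  have htail : q.support.tail
      = ((q.takeUntil y hy).support).tail ++ ((q.dropUntil y hy).support).tail := by
    rw [hq, List.tail_append_of_ne_nil (Walk.support_ne_nil _)]
  refine List.Nodup.sublist ?_ h
  rw [htail, ← List.append_assoc]
  exact List.sublist_append_left _ _

lemma desc_refl (u : N) : D.Desc u u := by
  obtain ⟨p, hp, -⟩ := D.isTree.existsUnique_path D.root u
  exact ⟨p, hp, p.end_mem_support⟩

/-- Core lemma: if `t` is an ancestor of `z`, then every vertex on a path from `t`
to `z` is a descendant of `t`. -/
lemma desc_of_mem_path {t z y : N} (ht : D.Desc t z) (q : D.tree.Walk t z)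
    (hq : q.IsPath) (hy : y ∈ q.support) : D.Desc t y := by
  obtain ⟨r, hr, htr⟩ := ht
  have hqr : q = r.dropUntil t htr :=
    (D.isTree.existsUnique_path t z).unique hq (hr.dropUntil htr)
  subst hqr
  have hrsplit : ((r.takeUntil t htr).append (r.dropUntil t htr)).IsPath := by
    rw [Walk.take_spec]; exact hr
  refine ⟨(r.takeUntil t htr).append ((r.dropUntil t htr).takeUntil y hy), ?_, ?_⟩
  · exact isPath_append_takeUntil hrsplit hy
  · rw [Walk.mem_support_append_iff]
    exact Or.inl (Walk.end_mem_support _)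

lemma desc_trans_s13 {s t u : N} (hst : D.Desc s t) (htu : D.Desc t u) : D.Desc s u := by
  obtain ⟨p, hp, htp⟩ := htu
  obtain ⟨q, hq, hsq⟩ := hst
  have : q = p.takeUntil t htp :=
    (D.isTree.existsUnique_path D.root t).unique hq (hp.takeUntil htp)
  subst this
  exact ⟨p, hp, Walk.support_takeUntil_subset p htp hsq⟩

lemma walk_eq_nil_of_isPath {G : SimpleGraph N} {u : N} (p : G.Walk u u) (hp : p.IsPath) :
    p.support = [u] := by
  cases p with
  | nil => simp
  | cons h q =>
    exfalso
    have h1 : u ∈ q.support := q.end_mem_support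
    have := hp.support_nodup
    rw [Walk.support_cons] at this
    exact (List.nodup_cons.1 this).1 h1

lemma desc_root_eq {s : N} (h : D.Desc s D.root) : s = D.root := by
  obtain ⟨p, hp, hsp⟩ := h
  rw [walk_eq_nil_of_isPath p hp] at hsp
  simpa using hsp

lemma desc_antisymm {s t : N} (hst : D.Desc s t) (hts : D.Desc t s) : s = t := by
  obtain ⟨p, hp, hsp⟩ := hst
  obtain ⟨q, hq, htq⟩ := hts
  have hq_eq : q = p.takeUntil s hsp :=
    (D.isTree.existsUnique_path D.root s).unique hq (hp.takeUntil hsp)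
  subst hq_eq
  -- t ∈ support of p.takeUntil s; take further
  have hp_eq : p = (p.takeUntil s hsp).takeUntil t htq :=
    (D.isTree.existsUnique_path D.root t).unique hp ((hp.takeUntil hsp).takeUntil htq)
  have h1 : ((p.takeUntil s hsp).takeUntil t htq).length ≤ (p.takeUntil s hsp).length :=
    Walk.length_takeUntil_le _ htq
  have h2 : (p.takeUntil s hsp).length ≤ p.length := Walk.length_takeUntil_le _ hsp
  rw [← hp_eq] at h1
  have hlen : (p.takeUntil s hsp).length = p.length := le_antisymm h2 h1
  -- hence dropUntil has length 0
  have h3 := congr_arg Walk.length (Walk.take_spec p hsp)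
  rw [Walk.length_append] at h3
  have h4 : (p.dropUntil s hsp).length = 0 := by omega
  -- a walk s → t of length 0 gives s = t
  cases hzero : (p.dropUntil s hsp) with
  | nil => exact (Walk.exists_length_eq_zero_iff.1 ⟨p.dropUntil s hsp, h4⟩)
  | cons h q => exact (Walk.exists_length_eq_zero_iff.1 ⟨p.dropUntil s hsp, h4⟩)

lemma desc_total_s13 {t w z : N} (htz : D.Desc t z) (hwz : D.Desc w z) :
    D.Desc t w ∨ D.Desc w t := by
  obtain ⟨p, hp, htp⟩ := htz
  obtain ⟨q, hq, hwq⟩ := hwz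
  have hq_eq : q = p := (D.isTree.existsUnique_path D.root z).unique hq hp
  rw [hq_eq] at hwq
  by_cases hw : w ∈ (p.takeUntil t htp).support
  · exact Or.inr ⟨p.takeUntil t htp, hp.takeUntil htp, hw⟩
  · have hw2 : w ∈ (p.dropUntil t htp).support := by
      have := hwq
      rw [← Walk.take_spec p htp, Walk.mem_support_append_iff] at this
      tauto
    exact Or.inl (desc_of_mem_path D ⟨p, hp, htp⟩ (p.dropUntil t htp) (hp.dropUntil htp) hw2)

lemma adj_comparable {t s : N} (h : D.tree.Adj t s) : D.Desc t s ∨ D.Desc s t := by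
  obtain ⟨p, hp, -⟩ := D.isTree.existsUnique_path D.root t
  by_cases hs : s ∈ p.support
  · exact Or.inr ⟨p, hp, hs⟩
  · refine Or.inl ⟨p.concat h, ?_, ?_⟩
    · rw [Walk.isPath_def, Walk.support_concat]
      refine List.Nodup.append hp.support_nodup (List.nodup_singleton s) ?_
      intro a ha hb
      rw [List.mem_singleton] at hb
      subst hb
      exact hs ha
    · rw [Walk.support_concat]
      exact List.mem_append.2 (Or.inl p.end_mem_support)

lemma isChild_ne_root {t s : N} (h : D.IsChild t s) : t ≠ D.root := by
  intro heq
  subst heq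
  exact h.1.ne' (desc_root_eq D h.2)

lemma vertsBelow_mono {t u : N} (h : D.Desc t u) : D.vertsBelow u ⊆ D.vertsBelow t :=
  fun _ hg => desc_trans_s13 D h hg

lemma vertsBelow_disjoint {t w : N} (h1 : ¬ D.Desc t w) (h2 : ¬ D.Desc w t) {g : V}
    (hg : g ∈ D.vertsBelow t) : g ∉ D.vertsBelow w :=
  fun hg2 => (desc_total_s13 D hg hg2).elim h1 h2

/-- Every vertex on the path between `u₁` and `u₂` is an ancestor of `u₁` or of `u₂`. -/
lemma mem_path_desc {u1 u2 v : N} (p : D.tree.Walk u1 u2) (hp : p.IsPath)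
    (hv : v ∈ p.support) : D.Desc v u1 ∨ D.Desc v u2 := by
  obtain ⟨q1, hq1, -⟩ := D.isTree.existsUnique_path D.root u1
  obtain ⟨q2, hq2, -⟩ := D.isTree.existsUnique_path D.root u2
  have hpeq : p = (q1.reverse.append q2).bypass :=
    (D.isTree.existsUnique_path u1 u2).unique hp (Walk.bypass_isPath _)
  subst hpeq
  have := Walk.support_bypass_subset _ hv
  rw [Walk.mem_support_append_iff, Walk.support_reverse, List.mem_reverse] at this
  rcases this with h | h
  · exact Or.inl ⟨q1, hq1, h⟩
  · exact Or.inr ⟨q2, hq2, h⟩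

/-- If `t` lies on the path from `u₁` to `u₂` and is an ancestor of both, then every
vertex of the path is a descendant of `t`. -/
lemma desc_all_of_both {u1 u2 t y : N} (p : D.tree.Walk u1 u2) (hp : p.IsPath)
    (htp : t ∈ p.support) (h1 : D.Desc t u1) (h2 : D.Desc t u2)
    (hy : y ∈ p.support) : D.Desc t y := by
  rw [← Walk.take_spec p htp, Walk.mem_support_append_iff] at hy
  rcases hy with hy | hy
  · refine desc_of_mem_path D h1 (p.takeUntil t htp).reverse ((hp.takeUntil htp).reverse) ?_
    rw [Walk.support_reverse, List.mem_reverse]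
    exact hy
  · exact desc_of_mem_path D h2 (p.dropUntil t htp) (hp.dropUntil htp) hy

end TreeLemmas
section KeyLemmas

variable {V N : Type} [Fintype V] [DecidableEq N]
variable (G : SimpleGraph V) (D : RootedBranchDecomp V N) (C : N → Set V) (x : V)

/-- The heart of the argument: if `t` is an ancestor of `u` and `w` is either an
ancestor of `t` or incomparable with `t`, and `x` belongs to the König covers at
`u` and at `w`, then `x` belongs to the König cover at `t`. -/
lemma key1
    (hC : ∀ u : N, u ≠ D.root → IsKoenigCover
      (crossingGraph G (D.vertsBelow u) (D.vertsBelow u)ᶜ)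
      (D.vertsBelow u) (D.vertsBelow u)ᶜ (C u))
    {u w t : N}
    (hu_nr : u ≠ D.root) (hw_nr : w ≠ D.root) (ht_nr : t ≠ D.root)
    (htu : D.Desc t u)
    (hrel : D.Desc w t ∨ (¬ D.Desc t w ∧ ¬ D.Desc w t))
    (hxu : x ∈ C u) (hxw : x ∈ C w) : x ∈ C t := by
  classical
  obtain hKu := hC u hu_nr
  obtain hKw := hC w hw_nr
  obtain hKt := hC t ht_nr
  have hsub_ut : D.vertsBelow u ⊆ D.vertsBelow t := vertsBelow_mono D htu
  by_cases hxA : x ∈ D.vertsBelow t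
  · rcases hrel with hwt | ⟨hr1, hr2⟩
    · have hsub_tw : D.vertsBelow t ⊆ D.vertsBelow w := vertsBelow_mono D hwt
      have hex : ∃ K, IsMinVertexCover
          (crossingGraph G (D.vertsBelow w) (D.vertsBelow w)ᶜ) K ∧ x ∈ K :=
        ⟨C w, hKw.1, hxw⟩
      obtain ⟨K, hK, hxK⟩ := transfer_A_ex hsub_tw hxA hex
      exact ((hKt.2 K hK).1 ⟨hxA, hxK⟩).2
    · have hdisj : D.vertsBelow t ⊆ (D.vertsBelow w)ᶜ := fun g hg =>
        vertsBelow_disjoint D hr1 hr2 hg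
      have hall : ∀ K, IsMinVertexCover
          (crossingGraph G (D.vertsBelow w)ᶜ ((D.vertsBelow w)ᶜ)ᶜ) K → x ∈ K := by
        rw [crossing_compl]
        intro K hK
        exact ((hKw.2 K hK).2 ⟨hdisj hxA, hxw⟩).2
      have hall2 := transfer_A_all hdisj hxA hall
      exact hall2 _ hKt.1
  · have hxBu : x ∉ D.vertsBelow u := fun h => hxA (hsub_ut h)
    have hall : ∀ K, IsMinVertexCover
        (crossingGraph G (D.vertsBelow u) (D.vertsBelow u)ᶜ) K → x ∈ K :=
      fun K hK => ((hKu.2 K hK).2 ⟨hxBu, hxu⟩).2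
    exact transfer_B_all hsub_ut hxA hall _ hKt.1

/-- Every child endpoint along the path between two cover nodes is a cover node. -/
lemma key2
    (hC : ∀ u : N, u ≠ D.root → IsKoenigCover
      (crossingGraph G (D.vertsBelow u) (D.vertsBelow u)ᶜ)
      (D.vertsBelow u) (D.vertsBelow u)ᶜ (C u))
    {u1 u2 c d : N}
    (h1 : u1 ≠ D.root) (h2 : u2 ≠ D.root)
    (hx1 : x ∈ C u1) (hx2 : x ∈ C u2)
    (p : D.tree.Walk u1 u2) (hp : p.IsPath)
    (hc : c ∈ p.support) (hadj : D.tree.Adj c d)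
    (hd : d ∈ p.support) (hdc : D.Desc d c) : x ∈ C c := by
  have hc_nr : c ≠ D.root := isChild_ne_root D ⟨hadj, hdc⟩
  have hboth : ¬ (D.Desc c u1 ∧ D.Desc c u2) := by
    rintro ⟨ha, hb⟩
    have hcd : D.Desc c d := desc_all_of_both D p hp hc ha hb hd
    exact hadj.ne (desc_antisymm D hcd hdc)
  rcases mem_path_desc D p hp hc with hcu | hcu
  · by_cases ht1 : D.Desc c u2
    · exact absurd ⟨hcu, ht1⟩ hboth
    · by_cases ht2 : D.Desc u2 c
      · exact key1 G D C x hC h1 h2 hc_nr hcu (Or.inl ht2) hx1 hx2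
      · exact key1 G D C x hC h1 h2 hc_nr hcu (Or.inr ⟨ht1, ht2⟩) hx1 hx2
  · by_cases ht1 : D.Desc c u1
    · exact absurd ⟨ht1, hcu⟩ hboth
    · by_cases ht2 : D.Desc u1 c
      · exact key1 G D C x hC h2 h1 hc_nr hcu (Or.inl ht2) hx2 hx1
      · exact key1 G D C x hC h2 h1 hc_nr hcu (Or.inr ⟨ht1, ht2⟩) hx2 hx1

end KeyLemmas
/-- For a connected graph `G` and a rooted branch decomposition
`(T,δ)` over `V(G)`, where `C_u` is the `δ(u)`-König cover of
`G[δ(u), V(G)∖δ(u)]` for each non-root node `u`, for every vertex `x` of `G` the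
set of edges `{uv ∈ E(T) : u` the child endpoint, `x ∈ C_u}` induces a connected
subforest of `T`: any two nodes incident with such edges are joined by a walk
using only such edges. -/
theorem koenig_subforest_connected {V N : Type} [Fintype V] [Fintype N]
    (G : SimpleGraph V) (hG : G.Connected)
    (D : RootedBranchDecomp V N) (C : N → Set V)
    (hC : ∀ u : N, u ≠ D.root → IsKoenigCover
      (crossingGraph G (D.vertsBelow u) (D.vertsBelow u)ᶜ)
      (D.vertsBelow u) (D.vertsBelow u)ᶜ (C u))
    (x : V) :
    ∀ a b : N, (∃ c : N, (coverSubforest D C x).Adj a c) →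
      (∃ c : N, (coverSubforest D C x).Adj b c) →
      (coverSubforest D C x).Reachable a b := by
  classical
  intro a b ha hb
  obtain ⟨ca, hca⟩ := ha
  obtain ⟨cb, hcb⟩ := hb
  have extract : ∀ a c : N, (coverSubforest D C x).Adj a c →
      ∃ u, u ≠ D.root ∧ x ∈ C u ∧ (coverSubforest D C x).Reachable a u := by
    intro a c hac
    have h' := hac
    rw [coverSubforest, SimpleGraph.fromRel_adj] at h'
    rcases h'.2 with ⟨hic, hx⟩ | ⟨hic, hx⟩
    · exact ⟨a, isChild_ne_root D hic, hx, SimpleGraph.Reachable.refl a⟩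
    · exact ⟨c, isChild_ne_root D hic, hx, hac.reachable⟩
  obtain ⟨u1, h1, hx1, hr1⟩ := extract a ca hca
  obtain ⟨u2, h2, hx2, hr2⟩ := extract b cb hcb
  refine hr1.trans (SimpleGraph.Reachable.trans ?_ hr2.symm)
  obtain ⟨p, hp, -⟩ := D.isTree.existsUnique_path u1 u2
  have hedges : ∀ e ∈ p.edges, e ∈ (coverSubforest D C x).edgeSet := by
    intro e
    induction e using Sym2.ind with
    | _ c d =>
      intro he
      have hadj : D.tree.Adj c d := p.adj_of_mem_edges he
      have hcs : c ∈ p.support := p.fst_mem_support_of_mem_edges he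
      have hds : d ∈ p.support := p.snd_mem_support_of_mem_edges he
      rcases adj_comparable D hadj with hcd | hdc
      · have hxd : x ∈ C d := key2 G D C x hC h1 h2 hx1 hx2 p hp hds hadj.symm hcs hcd
        rw [SimpleGraph.mem_edgeSet, coverSubforest, SimpleGraph.fromRel_adj]
        exact ⟨hadj.ne, Or.inr ⟨⟨hadj.symm, hcd⟩, hxd⟩⟩
      · have hxc : x ∈ C c := key2 G D C x hC h1 h2 hx1 hx2 p hp hcs hadj hds hdc
        rw [SimpleGraph.mem_edgeSet, coverSubforest, SimpleGraph.fromRel_adj]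
        exact ⟨hadj.ne, Or.inl ⟨⟨hadj, hdc⟩, hxc⟩⟩
  exact ⟨p.transfer _ hedges⟩
end
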